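/- arXiv:1911.05398 — 3 statements merged into one kernel-verified Lean document; each statement's English description precedes it below -/
import Mathlib

section
/- Let J ≥ 3, h = 1/J, and let V^h_{∂0} be the space of continuous functions η : Ī → ℝ² that are affine on each subinterval [q_{j−1}, q_j], q_j = jh, where either I = ℝ/ℤ (so functions are 1-periodic and no boundary condition is imposed) or I = (0,1) and η·e₁ = 0 at ρ = 0 and ρ = 1. Let Δt > 0 and suppose X^m ∈ V^h_{∂0} satisfies X^m·e₁ > 0 in I and |X^m_ρ| > 0 in I (the derivative taken piecewise). Then there exists a unique X^{m+1} ∈ V^h_{∂0} such that ((X^m·e₁) (X^{m+1}−X^m)/Δt, η |X^m_ρ|²) + ((X^m·e₁) X^{m+1}_ρ, η_ρ) + (η·e₁, |X^m_ρ|²) = 0 for all η ∈ V^h_{∂0}. -/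
/- STATEMENT 0: Existence and uniqueness of the solution `X^{m+1}` of one step of the
linearized fully discrete scheme `(P^{h,Δt})`, in the piecewise affine finite element
space `V^h_{∂0}`, for both the periodic case `I = ℝ/ℤ` and the open case `I = (0,1)`
with boundary condition `η·e₁ = 0` at the endpoints (Lemma 2.1 of the paper). -/

open MeasureTheory Real Set
open scoped RealInnerProductSpace

noncomputable section

abbrev E2 := EuclideanSpace ℝ (Fin 2)

def e1 : E2 := EuclideanSpace.single 0 1

/-- The finite element space `V^h_{∂0}`: continuous functions on `Ī = [0,1]` that are
affine on each subinterval `[j/J, (j+1)/J]`, and which are either periodic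
(`f 0 = f 1`, case `I = ℝ/ℤ`) or satisfy `f·e₁ = 0` at both endpoints
(case `I = (0,1)`). -/
def Vh0 (J : ℕ) (periodic : Bool) : Set (ℝ → E2) :=
  {f | ContinuousOn f (Set.Icc 0 1) ∧
    (∀ j : ℕ, j < J → ∃ a b : E2,
      ∀ ρ ∈ Set.Icc ((j : ℝ)/J) (((j : ℝ)+1)/J), f ρ = a + ρ • b) ∧
    (if periodic then f 0 = f 1 else (⟪f 0, e1⟫ = 0 ∧ ⟪f 1, e1⟫ = 0))}

/-- The scheme form: `((X^m·e₁) (X^{m+1}−X^m)/Δt, η |X^m_ρ|²) +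
((X^m·e₁) X^{m+1}_ρ, η_ρ) + (η·e₁, |X^m_ρ|²)`. -/
def Bform (Δt : ℝ) (Xm Xnew η : ℝ → E2) : ℝ :=
  ∫ ρ in (0:ℝ)..1,
    (⟪Xm ρ, e1⟫ * ⟪Δt⁻¹ • (Xnew ρ - Xm ρ), η ρ⟫ * ‖deriv Xm ρ‖^2
      + ⟪Xm ρ, e1⟫ * ⟪deriv Xnew ρ, deriv η ρ⟫
      + ⟪η ρ, e1⟫ * ‖deriv Xm ρ‖^2)

namespace OneStep

/-- hat function at node `j` on grid of size `1/J`. -/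
def hat (J j : ℕ) (ρ : ℝ) : ℝ := max 0 (1 - |ρ * J - j|)

lemma hat_continuous (J j : ℕ) : Continuous (hat J j) := by
  unfold hat; fun_prop

/-- piecewise affine interpolation of nodal values `u`. -/
def Pa (J : ℕ) (u : ℕ → E2) (ρ : ℝ) : E2 :=
  ∑ j ∈ Finset.range (J + 1), hat J j ρ • u j

lemma Pa_continuous (J : ℕ) (u : ℕ → E2) : Continuous (Pa J u) :=
  continuous_finset_sum _ fun j _ => ((hat_continuous J j).smul continuous_const)

/-- slope of the interpolant on piece `j`. -/
def slp (J : ℕ) (u : ℕ → E2) (j : ℕ) : E2 := (J : ℝ) • (u (j + 1) - u j)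

lemma hat_node (J : ℕ) (hJ : J ≠ 0) (j k : ℕ) :
    hat J j ((k : ℝ) / J) = if j = k then 1 else 0 := by
  have hJ' : (J : ℝ) ≠ 0 := Nat.cast_ne_zero.mpr hJ
  unfold hat
  rw [div_mul_cancel₀ _ hJ']
  by_cases h : j = k
  · simp [h]
  · have : (1 : ℝ) ≤ |(k : ℝ) - j| := by
      have : (k : ℝ) - j = ((k : ℤ) - j : ℤ) := by push_cast; ring
      rw [this, ← Int.cast_abs]
      have hne : (k : ℤ) - j ≠ 0 := by omega
      exact_mod_cast Int.one_le_abs hne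
    simp only [if_neg h]
    exact max_eq_left (by linarith)

lemma Pa_node (J : ℕ) (hJ : J ≠ 0) (u : ℕ → E2) (k : ℕ) (hk : k ≤ J) :
    Pa J u ((k : ℝ) / J) = u k := by
  unfold Pa
  rw [Finset.sum_eq_single k]
  · rw [hat_node J hJ k k, if_pos rfl, one_smul]
  · intro j hj hjk
    rw [hat_node J hJ j k, if_neg hjk, zero_smul]
  · intro h; exact absurd (Finset.mem_range.mpr (by omega)) h

lemma piece_subset_Icc {J j : ℕ} (hj : j < J) :
    Icc ((j : ℝ) / J) (((j : ℝ) + 1) / J) ⊆ Icc (0 : ℝ) 1 := by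
  have hJR : (0 : ℝ) < J := by exact_mod_cast Nat.pos_of_ne_zero (by omega)
  intro ρ hρ
  constructor
  · exact le_trans (by positivity) hρ.1
  · refine le_trans hρ.2 ?_
    rw [div_le_one hJR]
    exact_mod_cast Nat.succ_le_of_lt hj

lemma Pa_piece (J : ℕ) (u : ℕ → E2) {j : ℕ} (hj : j < J) {ρ : ℝ}
    (hρ : ρ ∈ Icc ((j : ℝ) / J) (((j : ℝ) + 1) / J)) :
    Pa J u ρ = u j + (ρ * J - j) • (u (j + 1) - u j) := by
  have hJR : (0 : ℝ) < J := by exact_mod_cast Nat.pos_of_ne_zero (by omega)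
  have hs1 : (j : ℝ) ≤ ρ * J := (div_le_iff₀ hJR).mp hρ.1
  have hs2 : ρ * J ≤ (j : ℝ) + 1 := by
    have := hρ.2
    rw [le_div_iff₀ hJR] at this
    linarith
  have hsub : ({j, j + 1} : Finset ℕ) ⊆ Finset.range (J + 1) := by
    intro k hk
    simp only [Finset.mem_insert, Finset.mem_singleton] at hk
    rcases hk with h | h <;> simp [Finset.mem_range] <;> omega
  have hzero : ∀ k ∈ Finset.range (J + 1), k ∉ ({j, j + 1} : Finset ℕ) →
      hat J k ρ • u k = 0 := by
    intro k _ hk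
    simp only [Finset.mem_insert, Finset.mem_singleton, not_or] at hk
    have : hat J k ρ = 0 := by
      unfold hat
      rcases lt_or_gt_of_ne hk.1 with h | h
      · -- k < j : ρ * J - k ≥ 1
        have hk' : (k : ℝ) ≤ (j : ℝ) - 1 := by
          have : (k : ℝ) + 1 ≤ j := by exact_mod_cast h
          linarith
        have : (1 : ℝ) ≤ |ρ * J - k| := by
          rw [abs_of_nonneg (by linarith)]; linarith
        exact max_eq_left (by linarith)
      · -- k > j + 1 : k - ρ * J ≥ 1
        have hk' : (j : ℝ) + 2 ≤ k := by
          have : j + 2 ≤ k := by omega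
          exact_mod_cast this
        have : (1 : ℝ) ≤ |ρ * J - k| := by
          rw [abs_of_nonpos (by linarith)]; linarith
        exact max_eq_left (by linarith)
    rw [this, zero_smul]
  have := (Finset.sum_subset hsub hzero).symm
  unfold Pa
  rw [this, Finset.sum_pair (by omega : j ≠ j + 1)]
  have h1 : hat J j ρ = 1 - (ρ * J - j) := by
    unfold hat
    rw [abs_of_nonneg (by linarith)]
    exact max_eq_right (by linarith)
  have h2 : hat J (j + 1) ρ = ρ * J - j := by
    unfold hat
    push_cast
    rw [abs_of_nonpos (by linarith), max_eq_right (by linarith)]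
    ring
  rw [h1, h2]
  module

lemma Pa_affine (J : ℕ) (u : ℕ → E2) {j : ℕ} (hj : j < J) {ρ : ℝ}
    (hρ : ρ ∈ Icc ((j : ℝ) / J) (((j : ℝ) + 1) / J)) :
    Pa J u ρ = (u j - (j : ℝ) • (u (j + 1) - u j)) + ρ • slp J u j := by
  rw [Pa_piece J u hj hρ]
  unfold slp
  module

lemma deriv_affine (a b : E2) (ρ : ℝ) :
    deriv (fun t : ℝ => a + t • b) ρ = b := by
  have : HasDerivAt (fun t : ℝ => a + t • b) b ρ := by
    simpa using (((hasDerivAt_id ρ).smul_const b).const_add a)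
  exact this.deriv

lemma deriv_Pa (J : ℕ) (u : ℕ → E2) {j : ℕ} (hj : j < J) {ρ : ℝ}
    (hρ : ρ ∈ Ioo ((j : ℝ) / J) (((j : ℝ) + 1) / J)) :
    deriv (Pa J u) ρ = slp J u j := by
  have hev : Pa J u =ᶠ[nhds ρ]
      (fun t => (u j - (j : ℝ) • (u (j + 1) - u j)) + t • slp J u j) := by
    filter_upwards [isOpen_Ioo.mem_nhds hρ] with t ht
    exact Pa_affine J u hj (Ioo_subset_Icc_self ht)
  rw [hev.deriv_eq, deriv_affine]


lemma Pa_add (J : ℕ) (u v : ℕ → E2) (ρ : ℝ) :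
    Pa J (u + v) ρ = Pa J u ρ + Pa J v ρ := by
  unfold Pa
  rw [← Finset.sum_add_distrib]
  exact Finset.sum_congr rfl fun j _ => by simp [smul_add]

lemma Pa_smul (J : ℕ) (c : ℝ) (u : ℕ → E2) (ρ : ℝ) :
    Pa J (c • u) ρ = c • Pa J u ρ := by
  unfold Pa
  rw [Finset.smul_sum]
  exact Finset.sum_congr rfl fun j _ => by simp [smul_smul, mul_comm]

lemma Pa_zero (J : ℕ) (ρ : ℝ) : Pa J (0 : ℕ → E2) ρ = 0 := by
  simp [Pa]

lemma slp_add (J : ℕ) (u v : ℕ → E2) (j : ℕ) :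
    slp J (u + v) j = slp J u j + slp J v j := by
  unfold slp; simp; module

lemma slp_smul (J : ℕ) (c : ℝ) (u : ℕ → E2) (j : ℕ) :
    slp J (c • u) j = c • slp J u j := by
  unfold slp; simp; module

lemma slp_zero (J : ℕ) (j : ℕ) : slp J (0 : ℕ → E2) j = 0 := by
  simp [slp]

lemma Pa_congr (J : ℕ) {u v : ℕ → E2} (h : ∀ n ≤ J, u n = v n) (ρ : ℝ) :
    Pa J u ρ = Pa J v ρ := by
  unfold Pa
  exact Finset.sum_congr rfl fun j hj =>
    by rw [h j (Nat.lt_succ_iff.mp (Finset.mem_range.mp hj))]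

lemma slp_congr (J : ℕ) {u v : ℕ → E2} (h : ∀ n ≤ J, u n = v n) {j : ℕ} (hj : j < J) :
    slp J u j = slp J v j := by
  unfold slp
  rw [h j (by omega), h (j + 1) (by omega)]

/-- nodal values of a function. -/
def nodal (J : ℕ) (f : ℝ → E2) (n : ℕ) : E2 := f ((n : ℝ) / J)

/-- every point of `[0,1]` is in some closed piece. -/
lemma exists_piece (J : ℕ) (hJ : J ≠ 0) {ρ : ℝ} (hρ : ρ ∈ Icc (0 : ℝ) 1) :
    ∃ j < J, ρ ∈ Icc ((j : ℝ) / J) (((j : ℝ) + 1) / J) := by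
  have hJR : (0 : ℝ) < J := by exact_mod_cast Nat.pos_of_ne_zero hJ
  have hρJ : 0 ≤ ρ * J := mul_nonneg hρ.1 hJR.le
  refine ⟨min ⌊ρ * J⌋₊ (J - 1), by omega, ?_, ?_⟩
  · rw [div_le_iff₀ hJR]
    rcases le_or_gt (⌊ρ * J⌋₊) (J - 1) with h | h
    · rw [min_eq_left h]
      exact_mod_cast Nat.floor_le hρJ
    · rw [min_eq_right h.le]
      have h1 : (J : ℝ) ≤ ⌊ρ * J⌋₊ := by exact_mod_cast by omega
      have h2 : (⌊ρ * J⌋₊ : ℝ) ≤ ρ * J := Nat.floor_le hρJ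
      have : ((J - 1 : ℕ) : ℝ) ≤ (J : ℝ) := by
        have : (J - 1 : ℕ) ≤ J := by omega
        exact_mod_cast this
      linarith
  · rw [le_div_iff₀ hJR]
    rcases le_or_gt (⌊ρ * J⌋₊) (J - 1) with h | h
    · rw [min_eq_left h]
      have := Nat.lt_floor_add_one (ρ * J)
      push_cast at this ⊢
      linarith [Nat.lt_floor_add_one (ρ * J)]
    · rw [min_eq_right h.le]
      have : ((J - 1 : ℕ) : ℝ) + 1 = (J : ℝ) := by
        have : J - 1 + 1 = J := by omega
        exact_mod_cast congrArg (Nat.cast : ℕ → ℝ) this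
      rw [this]
      nlinarith [hρ.2]

/-- a function in `Vh0` agrees on `[0,1]` with the interpolation of its nodal values. -/
lemma agree {J : ℕ} (hJ : J ≠ 0) {per : Bool} {f : ℝ → E2} (hf : f ∈ Vh0 J per)
    {ρ : ℝ} (hρ : ρ ∈ Icc (0 : ℝ) 1) : f ρ = Pa J (nodal J f) ρ := by
  obtain ⟨j, hj, hρj⟩ := exists_piece J hJ hρ
  obtain ⟨a, b, hab⟩ := hf.2.1 j hj
  have hJR : (0 : ℝ) < J := by exact_mod_cast Nat.pos_of_ne_zero hJ
  have hle : (j : ℝ) / J ≤ ((j : ℝ) + 1) / J := by gcongr; linarith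
  have hfj : nodal J f j = a + ((j : ℝ) / J) • b := hab _ ⟨le_refl _, hle⟩
  have hfj1 : nodal J f (j + 1) = a + (((j : ℝ) + 1) / J) • b := by
    have h := hab _ ⟨hle, le_refl _⟩
    unfold nodal
    rw [← h]
    norm_num
  rw [hab ρ hρj, Pa_piece J _ hj hρj, hfj, hfj1]
  have e2 : ((j : ℝ) + 1) / J = (j : ℝ) / J + (J : ℝ)⁻¹ := by ring
  rw [e2]
  have e3 : (ρ * J - j) • ((J : ℝ)⁻¹ • b) = (ρ - (j : ℝ) / J) • b := by
    rw [smul_smul]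
    congr 1
    field_simp
  have e4 : (a + ((j : ℝ) / J + (J : ℝ)⁻¹) • b) - (a + ((j : ℝ) / J) • b)
      = (J : ℝ)⁻¹ • b := by module
  rw [e4, e3]
  module

lemma piece_open_subset {J j : ℕ} (hj : j < J) :
    Ioo ((j : ℝ) / J) (((j : ℝ) + 1) / J) ⊆ Ioo (0 : ℝ) 1 := by
  have hJR : (0 : ℝ) < J := by exact_mod_cast Nat.pos_of_ne_zero (by omega)
  intro ρ hρ
  constructor
  · exact lt_of_le_of_lt (by positivity) hρ.1
  · refine lt_of_lt_of_le hρ.2 ?_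
    rw [div_le_one hJR]
    exact_mod_cast Nat.succ_le_of_lt hj

/-- the derivative of a `Vh0` function on an open piece is the slope of its
nodal interpolant. -/
lemma deriv_agree {J : ℕ} (hJ : J ≠ 0) {per : Bool} {f : ℝ → E2} (hf : f ∈ Vh0 J per)
    {j : ℕ} (hj : j < J) {ρ : ℝ} (hρ : ρ ∈ Ioo ((j : ℝ) / J) (((j : ℝ) + 1) / J)) :
    deriv f ρ = slp J (nodal J f) j := by
  have hev : f =ᶠ[nhds ρ] Pa J (nodal J f) := by
    filter_upwards [isOpen_Ioo.mem_nhds hρ] with t ht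
    exact agree hJ hf (piece_subset_Icc hj (Ioo_subset_Icc_self ht))
  rw [hev.deriv_eq, deriv_Pa J _ hj hρ]

/-- the interpolant belongs to `Vh0` iff its nodal values satisfy the boundary
condition. -/
lemma Pa_mem {J : ℕ} (hJ : J ≠ 0) (per : Bool) (u : ℕ → E2)
    (hbc : if per then u 0 = u J else (⟪u 0, e1⟫ = 0 ∧ ⟪u J, e1⟫ = 0)) :
    Pa J u ∈ Vh0 J per := by
  have hJR : (0 : ℝ) < J := by exact_mod_cast Nat.pos_of_ne_zero hJ
  have h0 : Pa J u 0 = u 0 := by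
    have := Pa_node J hJ u 0 (by omega)
    simpa using this
  have h1 : Pa J u 1 = u J := by
    have := Pa_node J hJ u J le_rfl
    rwa [div_self hJR.ne'] at this
  refine ⟨(Pa_continuous J u).continuousOn, fun j hj => ?_, ?_⟩
  · exact ⟨u j - (j : ℝ) • (u (j + 1) - u j), slp J u j,
      fun ρ hρ => Pa_affine J u hj hρ⟩
  · rw [h0, h1]; exact hbc

/-- a.e. point of `(0,1]` lies in an open piece. -/
lemma ae_mem_open_piece (J : ℕ) (hJ : J ≠ 0) :
    ∀ᵐ ρ : ℝ, ρ ∈ Ioc (0 : ℝ) 1 → ∃ j < J, ρ ∈ Ioo ((j : ℝ) / J) (((j : ℝ) + 1) / J) := by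
  have hnodes : (volume : Measure ℝ) ((fun n : ℕ => (n : ℝ) / J) '' Set.univ) = 0 :=
    (Set.Countable.image (Set.countable_univ) _).measure_zero _
  have hae : ∀ᵐ ρ : ℝ, ρ ∉ (fun n : ℕ => (n : ℝ) / J) '' Set.univ := by
    rw [ae_iff]
    have h := hnodes
    simp at h ⊢
    exact h
  filter_upwards [hae] with ρ hρnode hρ
  obtain ⟨j, hj, hρj⟩ := exists_piece J hJ ⟨hρ.1.le, hρ.2⟩
  refine ⟨j, hj, lt_of_le_of_ne hρj.1 ?_, lt_of_le_of_ne ?_ ?_⟩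
  · intro h
    exact hρnode ⟨j, trivial, h⟩
  · exact hρj.2
  · intro h
    refine hρnode ⟨j + 1, trivial, ?_⟩
    rw [h]; push_cast; ring

/-- a.e. point of an interval `(a, b]` is `≠ b`. -/
lemma ae_ne (b : ℝ) : ∀ᵐ ρ : ℝ, ρ ≠ b := by
  rw [ae_iff]
  simp only [ne_eq, not_not, setOf_eq_eq_singleton]
  exact measure_singleton b

/-! ### Per-piece integrals -/

def Ajint (J : ℕ) (Δt : ℝ) (x w v : ℕ → E2) (j : ℕ) (ρ : ℝ) : ℝ :=
  ⟪Pa J x ρ, e1⟫ * (Δt⁻¹ * ⟪Pa J w ρ, Pa J v ρ⟫ * ‖slp J x j‖^2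
    + ⟪slp J w j, slp J v j⟫)

def Ljint (J : ℕ) (Δt : ℝ) (x v : ℕ → E2) (j : ℕ) (ρ : ℝ) : ℝ :=
  -(⟪Pa J x ρ, e1⟫ * (Δt⁻¹ * ⟪Pa J x ρ, Pa J v ρ⟫) * ‖slp J x j‖^2)
    + ⟪Pa J v ρ, e1⟫ * ‖slp J x j‖^2

def Ijint (J : ℕ) (Δt : ℝ) (x w v : ℕ → E2) (j : ℕ) (ρ : ℝ) : ℝ :=
  ⟪Pa J x ρ, e1⟫ * ⟪Δt⁻¹ • (Pa J w ρ - Pa J x ρ), Pa J v ρ⟫ * ‖slp J x j‖^2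
    + ⟪Pa J x ρ, e1⟫ * ⟪slp J w j, slp J v j⟫ + ⟪Pa J v ρ, e1⟫ * ‖slp J x j‖^2

lemma inner_e1_continuous (J : ℕ) (u : ℕ → E2) :
    Continuous fun ρ => (⟪Pa J u ρ, e1⟫ : ℝ) :=
  (Pa_continuous J u).inner continuous_const

lemma inner_Pa_continuous (J : ℕ) (u v : ℕ → E2) :
    Continuous fun ρ => (⟪Pa J u ρ, Pa J v ρ⟫ : ℝ) :=
  (Pa_continuous J u).inner (Pa_continuous J v)

lemma Ajint_continuous (J : ℕ) (Δt : ℝ) (x w v : ℕ → E2) (j : ℕ) :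
    Continuous (Ajint J Δt x w v j) := by
  unfold Ajint
  exact (inner_e1_continuous J x).mul
    (((continuous_const.mul (inner_Pa_continuous J w v)).mul continuous_const).add
      continuous_const)

lemma Ljint_continuous (J : ℕ) (Δt : ℝ) (x v : ℕ → E2) (j : ℕ) :
    Continuous (Ljint J Δt x v j) := by
  unfold Ljint
  exact (((inner_e1_continuous J x).mul
      (continuous_const.mul (inner_Pa_continuous J x v))).mul continuous_const).neg.add
    ((inner_e1_continuous J v).mul continuous_const)

lemma Ijint_eq (J : ℕ) (Δt : ℝ) (x w v : ℕ → E2) (j : ℕ) (ρ : ℝ) :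
    Ijint J Δt x w v j ρ = Ajint J Δt x w v j ρ + Ljint J Δt x v j ρ := by
  unfold Ijint Ajint Ljint
  rw [real_inner_smul_left, inner_sub_left]
  ring

def Aj (J : ℕ) (Δt : ℝ) (x w v : ℕ → E2) (j : ℕ) : ℝ :=
  ∫ ρ in ((j : ℝ)/J)..(((j : ℝ)+1)/J), Ajint J Δt x w v j ρ

def Lj (J : ℕ) (Δt : ℝ) (x v : ℕ → E2) (j : ℕ) : ℝ :=
  ∫ ρ in ((j : ℝ)/J)..(((j : ℝ)+1)/J), Ljint J Δt x v j ρ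

def Ij (J : ℕ) (Δt : ℝ) (x w v : ℕ → E2) (j : ℕ) : ℝ :=
  ∫ ρ in ((j : ℝ)/J)..(((j : ℝ)+1)/J), Ijint J Δt x w v j ρ

lemma Ij_decomp (J : ℕ) (Δt : ℝ) (x w v : ℕ → E2) (j : ℕ) :
    Ij J Δt x w v j = Aj J Δt x w v j + Lj J Δt x v j := by
  unfold Ij Aj Lj
  rw [← intervalIntegral.integral_add
    ((Ajint_continuous J Δt x w v j).intervalIntegrable _ _)
    ((Ljint_continuous J Δt x v j).intervalIntegrable _ _)]
  simp only [Ijint_eq]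

lemma Aj_add_left (J : ℕ) (Δt : ℝ) (x w w' v : ℕ → E2) (j : ℕ) :
    Aj J Δt x (w + w') v j = Aj J Δt x w v j + Aj J Δt x w' v j := by
  unfold Aj
  rw [← intervalIntegral.integral_add
    ((Ajint_continuous J Δt x w v j).intervalIntegrable _ _)
    ((Ajint_continuous J Δt x w' v j).intervalIntegrable _ _)]
  refine intervalIntegral.integral_congr fun ρ _ => ?_
  unfold Ajint
  rw [Pa_add, slp_add, inner_add_left, inner_add_left]
  ring

lemma Aj_smul_left (J : ℕ) (Δt : ℝ) (c : ℝ) (x w v : ℕ → E2) (j : ℕ) :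
    Aj J Δt x (c • w) v j = c * Aj J Δt x w v j := by
  unfold Aj
  rw [← intervalIntegral.integral_const_mul]
  refine intervalIntegral.integral_congr fun ρ _ => ?_
  unfold Ajint
  rw [Pa_smul, slp_smul, real_inner_smul_left, real_inner_smul_left]
  ring

lemma Aj_add_right (J : ℕ) (Δt : ℝ) (x w v v' : ℕ → E2) (j : ℕ) :
    Aj J Δt x w (v + v') j = Aj J Δt x w v j + Aj J Δt x w v' j := by
  unfold Aj
  rw [← intervalIntegral.integral_add
    ((Ajint_continuous J Δt x w v j).intervalIntegrable _ _)
    ((Ajint_continuous J Δt x w v' j).intervalIntegrable _ _)]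
  refine intervalIntegral.integral_congr fun ρ _ => ?_
  unfold Ajint
  rw [Pa_add, slp_add, inner_add_right, inner_add_right]
  ring

lemma Aj_smul_right (J : ℕ) (Δt : ℝ) (c : ℝ) (x w v : ℕ → E2) (j : ℕ) :
    Aj J Δt x w (c • v) j = c * Aj J Δt x w v j := by
  unfold Aj
  rw [← intervalIntegral.integral_const_mul]
  refine intervalIntegral.integral_congr fun ρ _ => ?_
  unfold Ajint
  rw [Pa_smul, slp_smul, real_inner_smul_right, real_inner_smul_right]
  ring

lemma Lj_add (J : ℕ) (Δt : ℝ) (x v v' : ℕ → E2) (j : ℕ) :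
    Lj J Δt x (v + v') j = Lj J Δt x v j + Lj J Δt x v' j := by
  unfold Lj
  rw [← intervalIntegral.integral_add
    ((Ljint_continuous J Δt x v j).intervalIntegrable _ _)
    ((Ljint_continuous J Δt x v' j).intervalIntegrable _ _)]
  refine intervalIntegral.integral_congr fun ρ _ => ?_
  unfold Ljint
  rw [Pa_add, inner_add_right, inner_add_left]
  ring

lemma Lj_smul (J : ℕ) (Δt : ℝ) (c : ℝ) (x v : ℕ → E2) (j : ℕ) :
    Lj J Δt x (c • v) j = c * Lj J Δt x v j := by
  unfold Lj
  rw [← intervalIntegral.integral_const_mul]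
  refine intervalIntegral.integral_congr fun ρ _ => ?_
  unfold Ljint
  rw [Pa_smul, real_inner_smul_right, real_inner_smul_left]
  ring

lemma Aj_congr_left (J : ℕ) (Δt : ℝ) (x : ℕ → E2) {w w' : ℕ → E2}
    (h : ∀ n ≤ J, w n = w' n) (v : ℕ → E2) {j : ℕ} (hj : j < J) :
    Aj J Δt x w v j = Aj J Δt x w' v j := by
  unfold Aj
  refine intervalIntegral.integral_congr fun ρ _ => ?_
  unfold Ajint
  rw [Pa_congr J h, slp_congr J h hj]

lemma Aj_congr_right (J : ℕ) (Δt : ℝ) (x w : ℕ → E2) {v v' : ℕ → E2}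
    (h : ∀ n ≤ J, v n = v' n) {j : ℕ} (hj : j < J) :
    Aj J Δt x w v j = Aj J Δt x w v' j := by
  unfold Aj
  refine intervalIntegral.integral_congr fun ρ _ => ?_
  unfold Ajint
  rw [Pa_congr J h, slp_congr J h hj]

lemma Lj_congr (J : ℕ) (Δt : ℝ) (x : ℕ → E2) {v v' : ℕ → E2}
    (h : ∀ n ≤ J, v n = v' n) {j : ℕ} (hj : j < J) :
    Lj J Δt x v j = Lj J Δt x v' j := by
  unfold Lj
  refine intervalIntegral.integral_congr fun ρ _ => ?_
  unfold Ljint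
  rw [Pa_congr J h]

lemma Ij_congr (J : ℕ) (Δt : ℝ) (x : ℕ → E2) {w w' v v' : ℕ → E2}
    (hw : ∀ n ≤ J, w n = w' n) (hv : ∀ n ≤ J, v n = v' n) {j : ℕ} (hj : j < J) :
    Ij J Δt x w v j = Ij J Δt x w' v' j := by
  rw [Ij_decomp, Ij_decomp, Aj_congr_left J Δt x hw v hj,
    Aj_congr_right J Δt x w' hv hj, Lj_congr J Δt x hv hj]

lemma Ajint_diag (J : ℕ) (Δt : ℝ) (x u : ℕ → E2) (j : ℕ) (ρ : ℝ) :
    Ajint J Δt x u u j ρ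
      = ⟪Pa J x ρ, e1⟫ * (Δt⁻¹ * ‖Pa J u ρ‖^2 * ‖slp J x j‖^2 + ‖slp J u j‖^2) := by
  unfold Ajint
  rw [real_inner_self_eq_norm_sq, real_inner_self_eq_norm_sq]

lemma Aj_diag_nonneg (J : ℕ) (Δt : ℝ) (hΔt : 0 < Δt) (x u : ℕ → E2) {j : ℕ}
    (hj : j < J)
    (hc : ∀ ρ ∈ Icc ((j : ℝ)/J) (((j : ℝ)+1)/J), 0 ≤ (⟪Pa J x ρ, e1⟫ : ℝ)) :
    0 ≤ Aj J Δt x u u j := by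
  have hJR : (0 : ℝ) < J := by exact_mod_cast Nat.pos_of_ne_zero (by omega)
  have hab : (j : ℝ)/J ≤ ((j : ℝ)+1)/J := by gcongr; linarith
  refine intervalIntegral.integral_nonneg hab fun ρ hρ => ?_
  rw [Ajint_diag]
  have h1 : 0 ≤ Δt⁻¹ * ‖Pa J u ρ‖^2 * ‖slp J x j‖^2 + ‖slp J u j‖^2 := by positivity
  exact mul_nonneg (hc ρ hρ) h1

lemma Ijint_continuous (J : ℕ) (Δt : ℝ) (x w v : ℕ → E2) (j : ℕ) :
    Continuous (Ijint J Δt x w v j) := by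
  have : Ijint J Δt x w v j = fun ρ => Ajint J Δt x w v j ρ + Ljint J Δt x v j ρ :=
    funext fun ρ => Ijint_eq J Δt x w v j ρ
  rw [this]
  exact (Ajint_continuous J Δt x w v j).add (Ljint_continuous J Δt x v j)

/-- definiteness on one piece. -/
lemma Aj_diag_zero (J : ℕ) (Δt : ℝ) (hΔt : 0 < Δt) (x u : ℕ → E2) {j : ℕ}
    (hj : j < J)
    (hc : ∀ ρ ∈ Icc ((j : ℝ)/J) (((j : ℝ)+1)/J), 0 ≤ (⟪Pa J x ρ, e1⟫ : ℝ))
    (hcpos : ∀ ρ ∈ Ioo ((j : ℝ)/J) (((j : ℝ)+1)/J), 0 < (⟪Pa J x ρ, e1⟫ : ℝ))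
    (hsx : slp J x j ≠ 0)
    (h0 : Aj J Δt x u u j = 0) : u j = 0 ∧ u (j + 1) = 0 := by
  have hJR : (0 : ℝ) < J := by exact_mod_cast Nat.pos_of_ne_zero (by omega)
  have hab : (j : ℝ)/J < ((j : ℝ)+1)/J := by gcongr <;> linarith
  have hint := (Ajint_continuous J Δt x u u j).intervalIntegrable (μ := volume)
    ((j : ℝ)/J) (((j : ℝ)+1)/J)
  have hnn : 0 ≤ᵐ[volume.restrict (Ioc ((j : ℝ)/J) (((j : ℝ)+1)/J))]
      Ajint J Δt x u u j := by
    refine ae_restrict_of_forall_mem measurableSet_Ioc fun ρ hρ => ?_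
    rw [Ajint_diag]
    exact mul_nonneg (hc ρ (Ioc_subset_Icc_self hρ)) (by positivity)
  have hz := (intervalIntegral.integral_eq_zero_iff_of_le_of_nonneg_ae hab.le hnn
    hint).mp h0
  have hz' : Ajint J Δt x u u j
      =ᵐ[volume.restrict (Ioo ((j : ℝ)/J) (((j : ℝ)+1)/J))] 0 :=
    ae_restrict_of_ae_restrict_of_subset Ioo_subset_Ioc_self hz
  have heq : EqOn (Ajint J Δt x u u j) 0 (Ioo ((j : ℝ)/J) (((j : ℝ)+1)/J)) :=
    Measure.eqOn_open_of_ae_eq hz' isOpen_Ioo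
      (Ajint_continuous J Δt x u u j).continuousOn continuousOn_const
  set ρ₀ : ℝ := (((j : ℝ)/J) + (((j : ℝ)+1)/J)) / 2 with hρ₀def
  have hρ₀ : ρ₀ ∈ Ioo ((j : ℝ)/J) (((j : ℝ)+1)/J) := ⟨by rw [hρ₀def]; linarith,
    by rw [hρ₀def]; linarith⟩
  have h := heq hρ₀
  rw [Ajint_diag] at h
  simp only [Pi.zero_apply] at h
  have hcp := hcpos ρ₀ hρ₀
  have hsum : Δt⁻¹ * ‖Pa J u ρ₀‖^2 * ‖slp J x j‖^2 + ‖slp J u j‖^2 = 0 := by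
    rcases mul_eq_zero.mp h with h' | h'
    · exact absurd h' hcp.ne'
    · exact h'
  have ht1 : (0:ℝ) ≤ Δt⁻¹ * ‖Pa J u ρ₀‖^2 * ‖slp J x j‖^2 := by positivity
  have ht2 : (0:ℝ) ≤ ‖slp J u j‖^2 := by positivity
  have hsu : slp J u j = 0 := by
    have : ‖slp J u j‖^2 = 0 := by linarith
    simpa using this
  have hPu : Pa J u ρ₀ = 0 := by
    have h1 : Δt⁻¹ * ‖Pa J u ρ₀‖^2 * ‖slp J x j‖^2 = 0 := by linarith
    have hΔt' : Δt⁻¹ ≠ 0 := by positivity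
    have hsx' : ‖slp J x j‖^2 ≠ 0 := by
      simpa using hsx
    have : ‖Pa J u ρ₀‖^2 = 0 := by
      rcases mul_eq_zero.mp h1 with h' | h'
      · rcases mul_eq_zero.mp h' with h'' | h''
        · exact absurd h'' hΔt'
        · exact h''
      · exact absurd h' hsx'
    simpa using this
  have hdiff : u (j + 1) - u j = 0 := by
    have := hsu
    unfold slp at this
    rcases smul_eq_zero.mp this with h' | h'
    · exact absurd h' (by exact_mod_cast hJR.ne')
    · exact h'
  have hPa := Pa_piece J u hj (Ioo_subset_Icc_self hρ₀)
  rw [hdiff, smul_zero, add_zero] at hPa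
  have huj : u j = 0 := by rw [← hPa]; exact hPu
  have huj1 : u (j + 1) = u j := sub_eq_zero.mp hdiff
  exact ⟨huj, by rw [huj1, huj]⟩

/-- master decomposition of `Bform` into per-piece integrals. -/
lemma Bform_eq {J : ℕ} (hJ : J ≠ 0) {per : Bool} (Δt : ℝ) {Xm X η : ℝ → E2}
    (hXm : Xm ∈ Vh0 J per) (hX : X ∈ Vh0 J per) (hη : η ∈ Vh0 J per) :
    Bform Δt Xm X η
      = ∑ j ∈ Finset.range J, Ij J Δt (nodal J Xm) (nodal J X) (nodal J η) j := by
  set G : ℝ → ℝ := fun ρ =>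
    ⟪Xm ρ, e1⟫ * ⟪Δt⁻¹ • (X ρ - Xm ρ), η ρ⟫ * ‖deriv Xm ρ‖^2
      + ⟪Xm ρ, e1⟫ * ⟪deriv X ρ, deriv η ρ⟫ + ⟪η ρ, e1⟫ * ‖deriv Xm ρ‖^2 with hGdef
  have key : ∀ j < J, ∀ ρ ∈ Ioo ((j : ℝ)/J) (((j : ℝ)+1)/J),
      G ρ = Ijint J Δt (nodal J Xm) (nodal J X) (nodal J η) j ρ := by
    intro j hj ρ hρ
    have hIcc : ρ ∈ Icc (0:ℝ) 1 := piece_subset_Icc hj (Ioo_subset_Icc_self hρ)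
    rw [hGdef]
    unfold Ijint
    rw [← agree hJ hXm hIcc, ← agree hJ hX hIcc, ← agree hJ hη hIcc,
      ← deriv_agree hJ hXm hj hρ, ← deriv_agree hJ hX hj hρ,
      ← deriv_agree hJ hη hj hρ]
  have hae : ∀ j < J, G =ᵐ[volume.restrict (Ioc ((j : ℝ)/J) (((j : ℝ)+1)/J))]
      Ijint J Δt (nodal J Xm) (nodal J X) (nodal J η) j := by
    intro j hj
    refine (ae_restrict_iff' measurableSet_Ioc).mpr ?_
    filter_upwards [ae_ne (((j : ℝ)+1)/J)] with ρ hne hρIoc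
    exact key j hj ρ ⟨hρIoc.1, lt_of_le_of_ne hρIoc.2 hne⟩
  have hab : ∀ j : ℕ, (j : ℝ)/J ≤ ((j : ℝ)+1)/J := by
    intro j
    have hJR : (0 : ℝ) < J := by exact_mod_cast Nat.pos_of_ne_zero hJ
    gcongr; linarith
  have hint : ∀ j < J, IntervalIntegrable G volume ((j : ℝ)/J) (((j : ℝ)+1)/J) := by
    intro j hj
    refine ((Ijint_continuous J Δt (nodal J Xm) (nodal J X) (nodal J η)
      j).intervalIntegrable _ _).congr_ae ?_
    rw [uIoc_of_le (hab j)]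
    exact (hae j hj).symm
  have hpiece : ∀ j < J, (∫ ρ in ((j : ℝ)/J)..(((j : ℝ)+1)/J), G ρ)
      = Ij J Δt (nodal J Xm) (nodal J X) (nodal J η) j := by
    intro j hj
    refine intervalIntegral.integral_congr_ae ?_
    rw [uIoc_of_le (hab j)]
    exact (ae_restrict_iff' measurableSet_Ioc).mp (hae j hj)
  have hsum := intervalIntegral.sum_integral_adjacent_intervals
    (μ := volume) (f := G) (a := fun k : ℕ => (k : ℝ)/J) (n := J) ?_
  · have h0 : ((0 : ℕ) : ℝ)/J = 0 := by norm_num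
    have h1 : ((J : ℕ) : ℝ)/J = 1 := by
      have hJR : (0 : ℝ) < J := by exact_mod_cast Nat.pos_of_ne_zero hJ
      field_simp
    rw [h0, h1] at hsum
    have : Bform Δt Xm X η = ∫ ρ in (0:ℝ)..1, G ρ := rfl
    rw [this, ← hsum]
    refine Finset.sum_congr rfl fun k hk => ?_
    have hk' := Finset.mem_range.mp hk
    push_cast
    exact hpiece k hk'
  · intro k hk
    push_cast
    exact hint k hk

/-! ### Finite-dimensional model space -/

def extn (J : ℕ) (v : Fin (J + 1) → E2) (n : ℕ) : E2 :=
  if h : n < J + 1 then v ⟨n, h⟩ else 0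

lemma extn_add (J : ℕ) (v w : Fin (J + 1) → E2) :
    extn J (v + w) = extn J v + extn J w := by
  funext n
  unfold extn
  by_cases h : n ≤ J <;> simp [h]

lemma extn_smul (J : ℕ) (c : ℝ) (v : Fin (J + 1) → E2) :
    extn J (c • v) = c • extn J v := by
  funext n
  unfold extn
  by_cases h : n ≤ J <;> simp [h]

lemma extn_zero_apply (J : ℕ) (v : Fin (J + 1) → E2) : extn J v 0 = v 0 := by
  unfold extn
  rw [dif_pos (by omega)]
  congr 1

lemma extn_last_apply (J : ℕ) (v : Fin (J + 1) → E2) : extn J v J = v (Fin.last J) := by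
  unfold extn
  rw [dif_pos (by omega)]
  congr 1

lemma extn_val (J : ℕ) (v : Fin (J + 1) → E2) (i : Fin (J + 1)) :
    extn J v i.val = v i := by
  unfold extn
  rw [dif_pos i.isLt]

/-- the discrete space with boundary conditions. -/
def Wsp (J : ℕ) (per : Bool) : Submodule ℝ (Fin (J + 1) → E2) where
  carrier := {v | if per then v 0 = v (Fin.last J)
    else ((⟪v 0, e1⟫ : ℝ) = 0 ∧ (⟪v (Fin.last J), e1⟫ : ℝ) = 0)}
  add_mem' := by
    intro a b ha hb
    cases per
    · simp only [Set.mem_setOf_eq, Bool.false_eq_true, if_false] at ha hb ⊢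
      refine ⟨?_, ?_⟩
      · rw [Pi.add_apply, inner_add_left, ha.1, hb.1, add_zero]
      · rw [Pi.add_apply, inner_add_left, ha.2, hb.2, add_zero]
    · simp only [Set.mem_setOf_eq, if_true] at ha hb ⊢
      rw [Pi.add_apply, Pi.add_apply, ha, hb]
  zero_mem' := by cases per <;> simp
  smul_mem' := by
    intro c a ha
    cases per
    · simp only [Set.mem_setOf_eq, Bool.false_eq_true, if_false] at ha ⊢
      refine ⟨?_, ?_⟩
      · rw [Pi.smul_apply, inner_smul_left, ha.1]; simp
      · rw [Pi.smul_apply, inner_smul_left, ha.2]; simp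
    · simp only [Set.mem_setOf_eq, if_true] at ha ⊢
      rw [Pi.smul_apply, Pi.smul_apply, ha]

lemma mem_Wsp (J : ℕ) (per : Bool) (v : Fin (J + 1) → E2) :
    v ∈ Wsp J per ↔ (if per then v 0 = v (Fin.last J)
      else ((⟪v 0, e1⟫ : ℝ) = 0 ∧ (⟪v (Fin.last J), e1⟫ : ℝ) = 0)) := Iff.rfl

def Asum (J : ℕ) (Δt : ℝ) (x : ℕ → E2) (w v : Fin (J + 1) → E2) : ℝ :=
  ∑ j ∈ Finset.range J, Aj J Δt x (extn J w) (extn J v) j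

def Lsum (J : ℕ) (Δt : ℝ) (x : ℕ → E2) (v : Fin (J + 1) → E2) : ℝ :=
  ∑ j ∈ Finset.range J, Lj J Δt x (extn J v) j

lemma Asum_add_left (J : ℕ) (Δt : ℝ) (x : ℕ → E2) (w w' v : Fin (J + 1) → E2) :
    Asum J Δt x (w + w') v = Asum J Δt x w v + Asum J Δt x w' v := by
  unfold Asum
  rw [← Finset.sum_add_distrib]
  exact Finset.sum_congr rfl fun j _ => by rw [extn_add, Aj_add_left]

lemma Asum_smul_left (J : ℕ) (Δt : ℝ) (x : ℕ → E2) (c : ℝ) (w v : Fin (J + 1) → E2) :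
    Asum J Δt x (c • w) v = c * Asum J Δt x w v := by
  unfold Asum
  rw [Finset.mul_sum]
  exact Finset.sum_congr rfl fun j _ => by rw [extn_smul, Aj_smul_left]

lemma Asum_add_right (J : ℕ) (Δt : ℝ) (x : ℕ → E2) (w v v' : Fin (J + 1) → E2) :
    Asum J Δt x w (v + v') = Asum J Δt x w v + Asum J Δt x w v' := by
  unfold Asum
  rw [← Finset.sum_add_distrib]
  exact Finset.sum_congr rfl fun j _ => by rw [extn_add, Aj_add_right]

lemma Asum_smul_right (J : ℕ) (Δt : ℝ) (x : ℕ → E2) (c : ℝ) (w v : Fin (J + 1) → E2) :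
    Asum J Δt x w (c • v) = c * Asum J Δt x w v := by
  unfold Asum
  rw [Finset.mul_sum]
  exact Finset.sum_congr rfl fun j _ => by rw [extn_smul, Aj_smul_right]

lemma Lsum_add (J : ℕ) (Δt : ℝ) (x : ℕ → E2) (v v' : Fin (J + 1) → E2) :
    Lsum J Δt x (v + v') = Lsum J Δt x v + Lsum J Δt x v' := by
  unfold Lsum
  rw [← Finset.sum_add_distrib]
  exact Finset.sum_congr rfl fun j _ => by rw [extn_add, Lj_add]

lemma Lsum_smul (J : ℕ) (Δt : ℝ) (x : ℕ → E2) (c : ℝ) (v : Fin (J + 1) → E2) :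
    Lsum J Δt x (c • v) = c * Lsum J Δt x v := by
  unfold Lsum
  rw [Finset.mul_sum]
  exact Finset.sum_congr rfl fun j _ => by rw [extn_smul, Lj_smul]

/-- the bilinear form on the discrete space. -/
def AbilW (J : ℕ) (Δt : ℝ) (x : ℕ → E2) (per : Bool) :
    LinearMap.BilinForm ℝ (Wsp J per) :=
  LinearMap.mk₂ ℝ (fun w v => Asum J Δt x w.val v.val)
    (fun w w' v => by
      show Asum J Δt x ((w + w' : Wsp J per) : Fin (J+1) → E2) v.val = _
      rw [Submodule.coe_add, Asum_add_left])
    (fun c w v => by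
      show Asum J Δt x ((c • w : Wsp J per) : Fin (J+1) → E2) v.val = _
      rw [Submodule.coe_smul, Asum_smul_left, smul_eq_mul])
    (fun w v v' => by
      show Asum J Δt x w.val ((v + v' : Wsp J per) : Fin (J+1) → E2) = _
      rw [Submodule.coe_add, Asum_add_right])
    (fun c w v => by
      show Asum J Δt x w.val ((c • v : Wsp J per) : Fin (J+1) → E2) = _
      rw [Submodule.coe_smul, Asum_smul_right, smul_eq_mul])

/-- the linear functional on the discrete space. -/
def LW (J : ℕ) (Δt : ℝ) (x : ℕ → E2) (per : Bool) :
    Module.Dual ℝ (Wsp J per) where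
  toFun := fun v => -(Lsum J Δt x v.val)
  map_add' := fun v v' => by
    show -(Lsum J Δt x ((v + v' : Wsp J per) : Fin (J+1) → E2)) = _
    rw [Submodule.coe_add, Lsum_add]; ring
  map_smul' := fun c v => by
    show -(Lsum J Δt x ((c • v : Wsp J per) : Fin (J+1) → E2)) = _
    rw [Submodule.coe_smul, Lsum_smul, RingHom.id_apply, smul_eq_mul]; ring

end OneStep

/-- Lemma 2.1: if `X^m ∈ V^h_{∂0}` satisfies `X^m·e₁ > 0` and `|X^m_ρ| > 0` in `I`
(the derivative taken piecewise), then there is a unique `X^{m+1} ∈ V^h_{∂0}` solving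
the linear scheme; uniqueness is as functions on `Ī = [0,1]`. -/
theorem one_step_existence_uniqueness
    (J : ℕ) (hJ : 3 ≤ J) (periodic : Bool) (Δt : ℝ) (hΔt : 0 < Δt)
    (Xm : ℝ → E2) (hXm : Xm ∈ Vh0 J periodic)
    (hpos : ∀ ρ ∈ (if periodic then Set.Icc (0:ℝ) 1 else Set.Ioo (0:ℝ) 1),
      0 < ⟪Xm ρ, e1⟫)
    (hderiv : ∀ j : ℕ, j < J → ∀ ρ ∈ Set.Ioo ((j : ℝ)/J) (((j : ℝ)+1)/J),
      deriv Xm ρ ≠ 0) :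
    ∃ Xnew ∈ Vh0 J periodic,
      (∀ η ∈ Vh0 J periodic, Bform Δt Xm Xnew η = 0) ∧
      ∀ Y ∈ Vh0 J periodic, (∀ η ∈ Vh0 J periodic, Bform Δt Xm Y η = 0) →
        ∀ ρ ∈ Set.Icc (0:ℝ) 1, Y ρ = Xnew ρ := by
  open OneStep in
  classical
  have hJ0 : J ≠ 0 := by omega
  have hJR : (0 : ℝ) < J := by exact_mod_cast Nat.pos_of_ne_zero hJ0
  set x : ℕ → E2 := nodal J Xm with hxdef
  -- nonnegativity / positivity of the weight
  have hcnonneg : ∀ ρ ∈ Icc (0:ℝ) 1, 0 ≤ (⟪Pa J x ρ, e1⟫ : ℝ) := by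
    intro ρ hIcc
    rw [← agree hJ0 hXm hIcc]
    cases hb : periodic
    · have hbc := hXm.2.2
      rw [hb] at hbc
      simp only [Bool.false_eq_true, if_false] at hbc
      rcases eq_or_lt_of_le hIcc.1 with h0 | h0
      · rw [← h0]; exact le_of_eq hbc.1.symm
      · rcases eq_or_lt_of_le hIcc.2 with h1 | h1
        · rw [h1]; exact le_of_eq hbc.2.symm
        · exact (hpos ρ (by
            simp only [hb, Bool.false_eq_true, if_false]
            exact ⟨h0, h1⟩)).le
    · exact (hpos ρ (by simp only [hb, if_true]; exact hIcc)).le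
  have hcpos : ∀ j, j < J → ∀ ρ ∈ Ioo ((j:ℝ)/J) (((j:ℝ)+1)/J),
      0 < (⟪Pa J x ρ, e1⟫ : ℝ) := by
    intro j hj ρ hρ
    have hIoo : ρ ∈ Ioo (0:ℝ) 1 := piece_open_subset hj hρ
    rw [← agree hJ0 hXm (Ioo_subset_Icc_self hIoo)]
    apply hpos
    cases hb : periodic
    · simp only [hb, Bool.false_eq_true, if_false]; exact hIoo
    · simp only [hb, if_true]; exact Ioo_subset_Icc_self hIoo
  have hsx : ∀ j, j < J → slp J x j ≠ 0 := by
    intro j hj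
    have hlt : (j:ℝ)/J < ((j:ℝ)+1)/J := by gcongr <;> linarith
    have hmid : (((j:ℝ)/J) + (((j:ℝ)+1)/J))/2 ∈ Ioo ((j:ℝ)/J) (((j:ℝ)+1)/J) :=
      ⟨by linarith, by linarith⟩
    rw [← deriv_agree hJ0 hXm hj hmid]
    exact hderiv j hj _ hmid
  have hcIcc : ∀ j, j < J → ∀ ρ ∈ Icc ((j:ℝ)/J) (((j:ℝ)+1)/J),
      0 ≤ (⟪Pa J x ρ, e1⟫ : ℝ) :=
    fun j hj ρ hρ => hcnonneg ρ (piece_subset_Icc hj hρ)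
  -- nondegeneracy of the bilinear form
  have hnd : (AbilW J Δt x periodic).Nondegenerate := by
    apply LinearMap.BilinForm.Nondegenerate.ofSeparatingLeft
    intro m hm
    have h0 : Asum J Δt x m.val m.val = 0 := hm m
    have hterm : ∀ j ∈ Finset.range J,
        Aj J Δt x (extn J m.val) (extn J m.val) j = 0 := by
      refine (Finset.sum_eq_zero_iff_of_nonneg ?_).mp h0
      intro j hjm
      exact Aj_diag_nonneg J Δt hΔt x _ (Finset.mem_range.mp hjm)
        (hcIcc j (Finset.mem_range.mp hjm))
    have hzero : ∀ j, j < J → extn J m.val j = 0 ∧ extn J m.val (j+1) = 0 := by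
      intro j hj
      exact Aj_diag_zero J Δt hΔt x _ hj (hcIcc j hj) (hcpos j hj) (hsx j hj)
        (hterm j (Finset.mem_range.mpr hj))
    have hval : m.val = 0 := by
      funext i
      have hi : i.val ≤ J := Nat.lt_succ_iff.mp i.isLt
      rcases lt_or_eq_of_le hi with h | h
      · have := (hzero i.val h).1
        rwa [extn_val] at this
      · have hJ1 : J - 1 < J := by omega
        have h2 := (hzero (J-1) hJ1).2
        have hcast : J - 1 + 1 = J := by omega
        rw [hcast, extn_last_apply] at h2
        have hil : i = Fin.last J := Fin.ext h
        rw [hil]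
        exact h2
    exact Subtype.ext hval
  -- solve the linear system
  set eq := (AbilW J Δt x periodic).toDual hnd with heqdef
  set w₀ : Wsp J periodic := eq.symm (LW J Δt x periodic) with hw0def
  have hsolve : ∀ v : Wsp J periodic,
      Asum J Δt x w₀.val v.val = -(Lsum J Δt x v.val) := by
    intro v
    have h2 : eq w₀ = LW J Δt x periodic := by
      rw [hw0def]; exact eq.apply_symm_apply _
    have h3 : (eq w₀) v = Asum J Δt x w₀.val v.val := by
      rw [heqdef]; exact LinearMap.BilinForm.toDual_def hnd
    rw [← h3, h2]
    rfl
  -- boundary conditions for elements of `Wsp`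
  have hbcW : ∀ v : Wsp J periodic,
      (if periodic then extn J v.val 0 = extn J v.val J
        else ((⟪extn J v.val 0, e1⟫ : ℝ) = 0 ∧ (⟪extn J v.val J, e1⟫ : ℝ) = 0)) := by
    intro v
    have hw := v.property
    rw [mem_Wsp] at hw
    rw [extn_zero_apply, extn_last_apply]
    exact hw
  have hXnewmem : Pa J (extn J w₀.val) ∈ Vh0 J periodic :=
    Pa_mem hJ0 periodic _ (hbcW w₀)
  -- per-piece decomposition combined
  have hsplit : ∀ w v : ℕ → E2, ∀ vv : Fin (J+1) → E2, (∀ n ≤ J, w n = extn J vv n) →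
      True := fun _ _ _ _ => trivial
  refine ⟨Pa J (extn J w₀.val), hXnewmem, ?_, ?_⟩
  · -- the scheme holds
    intro η hη
    set vf : Fin (J + 1) → E2 := fun i => η ((i.val : ℝ)/J) with hvfdef
    have hvfW : vf ∈ Wsp J periodic := by
      rw [mem_Wsp]
      have hbc := hη.2.2
      have hv0 : vf 0 = η 0 := by rw [hvfdef]; norm_num
      have hv1 : vf (Fin.last J) = η 1 := by
        rw [hvfdef]
        simp only [Fin.val_last]
        rw [div_self hJR.ne']
      cases hb : periodic
      · rw [hb] at hbc
        simp only [Bool.false_eq_true, if_false] at hbc ⊢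
        rw [hv0, hv1]
        exact hbc
      · rw [hb] at hbc
        simp only [if_true] at hbc ⊢
        rw [hv0, hv1]
        exact hbc
    have h1 : ∀ n ≤ J, nodal J (Pa J (extn J w₀.val)) n = extn J w₀.val n :=
      fun n hn => Pa_node J hJ0 _ n hn
    have h2 : ∀ n ≤ J, nodal J η n = extn J vf n := by
      intro n hn
      unfold extn
      rw [dif_pos (by omega)]
      rfl
    rw [Bform_eq hJ0 Δt hXm hXnewmem hη]
    rw [Finset.sum_congr rfl
      (fun j hj => Ij_congr J Δt x h1 h2 (Finset.mem_range.mp hj))]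
    have hsplit2 : ∑ j ∈ Finset.range J, Ij J Δt x (extn J w₀.val) (extn J vf) j
        = Asum J Δt x w₀.val vf + Lsum J Δt x vf := by
      unfold Asum Lsum
      rw [← Finset.sum_add_distrib]
      exact Finset.sum_congr rfl fun j _ => Ij_decomp J Δt x _ _ j
    rw [hsplit2]
    have h4 : Asum J Δt x w₀.val vf = -(Lsum J Δt x vf) := hsolve ⟨vf, hvfW⟩
    rw [h4]
    ring
  · -- uniqueness
    intro Y hY hsolveY
    set uf : Fin (J + 1) → E2 := fun i => Y ((i.val : ℝ)/J) with hufdef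
    have hufW : uf ∈ Wsp J periodic := by
      rw [mem_Wsp]
      have hbc := hY.2.2
      have hv0 : uf 0 = Y 0 := by rw [hufdef]; norm_num
      have hv1 : uf (Fin.last J) = Y 1 := by
        rw [hufdef]
        simp only [Fin.val_last]
        rw [div_self hJR.ne']
      cases hb : periodic
      · rw [hb] at hbc
        simp only [Bool.false_eq_true, if_false] at hbc ⊢
        rw [hv0, hv1]
        exact hbc
      · rw [hb] at hbc
        simp only [if_true] at hbc ⊢
        rw [hv0, hv1]
        exact hbc
    have hallv : ∀ v : Wsp J periodic,
        Asum J Δt x uf v.val + Lsum J Δt x v.val = 0 := by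
      intro v
      have hPav : Pa J (extn J v.val) ∈ Vh0 J periodic :=
        Pa_mem hJ0 periodic _ (hbcW v)
      have h0 := hsolveY _ hPav
      rw [Bform_eq hJ0 Δt hXm hY hPav] at h0
      have hu1 : ∀ n ≤ J, nodal J Y n = extn J uf n := by
        intro n hn
        unfold extn
        rw [dif_pos (by omega)]
        rfl
      have hv1 : ∀ n ≤ J, nodal J (Pa J (extn J v.val)) n = extn J v.val n :=
        fun n hn => Pa_node J hJ0 _ n hn
      rw [Finset.sum_congr rfl
        (fun j hj => Ij_congr J Δt x hu1 hv1 (Finset.mem_range.mp hj))] at h0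
      have hsplit3 : ∑ j ∈ Finset.range J, Ij J Δt x (extn J uf) (extn J v.val) j
          = Asum J Δt x uf v.val + Lsum J Δt x v.val := by
        unfold Asum Lsum
        rw [← Finset.sum_add_distrib]
        exact Finset.sum_congr rfl fun j _ => Ij_decomp J Δt x _ _ j
      rw [hsplit3] at h0
      exact h0
    have hdiff : (⟨uf, hufW⟩ - w₀ : Wsp J periodic) = 0 := by
      apply hnd.1
      intro v
      have ha := hallv v
      have hb := hsolve v
      have hc : (AbilW J Δt x periodic) (⟨uf, hufW⟩ - w₀) v
          = Asum J Δt x uf v.val - Asum J Δt x w₀.val v.val := by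
        rw [map_sub (AbilW J Δt x periodic) (⟨uf, hufW⟩ : Wsp J periodic) w₀,
          LinearMap.sub_apply]
        rfl
      rw [hc]
      linarith
    have hufw : uf = w₀.val := congrArg Subtype.val (sub_eq_zero.mp hdiff)
    intro ρ hρ
    rw [agree hJ0 hY hρ]
    have hcong : ∀ n ≤ J, nodal J Y n = extn J w₀.val n := by
      intro n hn
      have h5 : nodal J Y n = extn J uf n := by
        unfold extn
        rw [dif_pos (by omega)]
        rfl
      rw [h5, hufw]
    exact Pa_congr J hcong ρ
end
end

section
/- (Energy identity for the first formulation.) Let I = ℝ/ℤ, T > 0, and let x : I × [0,T] → ℝ² be such that x, x_ρ, x_ρρ, x_t and x_tρ exist and are continuous, and x solves (★) on I × [0,T]. Then for every t ∈ [0,T], (d/dt) ∫₀¹ (x·e₁) |x_ρ|² dρ = −2 ∫₀¹ (x·e₁) |x_t|² |x_ρ|² dρ − ∫₀¹ (x_t·e₁) |x_ρ|² dρ. -/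
/- STATEMENT 6: Energy identity for the first formulation (Section 4 of the paper):
for a smooth periodic solution of `(x·e₁)|x_ρ|² x_t − ((x·e₁) x_ρ)_ρ + |x_ρ|² e₁ = 0`,
`(d/dt) ∫₀¹ (x·e₁)|x_ρ|² dρ = −2 ∫₀¹ (x·e₁)|x_t|²|x_ρ|² dρ − ∫₀¹ (x_t·e₁)|x_ρ|² dρ`. -/

open MeasureTheory Real Set
open scoped RealInnerProductSpace

noncomputable section

-- Fubini for interval integrals of a (jointly) continuous function
lemma my_swap {E : Type*} [NormedAddCommGroup E] [NormedSpace ℝ E]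
    {f : ℝ → ℝ → E} (hf : Continuous (Function.uncurry f)) (a b c d : ℝ) :
    ∫ r in a..b, ∫ s in c..d, f r s = ∫ s in c..d, ∫ r in a..b, f r s := by
  have base : ∀ a b c d : ℝ, a ≤ b → c ≤ d →
      (∫ r in a..b, ∫ s in c..d, f r s) = ∫ s in c..d, ∫ r in a..b, f r s := by
    intro a b c d hab hcd
    have hint : Integrable (Function.uncurry f)
        ((volume.restrict (Ioc a b)).prod (volume.restrict (Ioc c d))) := by
      rw [Measure.prod_restrict]
      exact (hf.continuousOn.integrableOn_compact (isCompact_Icc.prod isCompact_Icc)).mono_set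
        (Set.prod_mono Set.Ioc_subset_Icc_self Set.Ioc_subset_Icc_self)
    simp only [intervalIntegral.integral_of_le hab, intervalIntegral.integral_of_le hcd]
    exact integral_integral_swap hint
  have h1 : ∀ c d : ℝ, c ≤ d → ∀ a b : ℝ,
      (∫ r in a..b, ∫ s in c..d, f r s) = ∫ s in c..d, ∫ r in a..b, f r s := by
    intro c d hcd a b
    rcases le_total a b with hab | hba
    · exact base a b c d hab hcd
    · rw [intervalIntegral.integral_symm b a, base b a c d hba hcd,
        ← intervalIntegral.integral_neg]
      refine intervalIntegral.integral_congr fun s _ => ?_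
      rw [intervalIntegral.integral_symm b a]
  rcases le_total c d with hcd | hdc
  · exact h1 c d hcd a b
  · have : (∫ r in a..b, ∫ s in c..d, f r s) = ∫ r in a..b, -∫ s in d..c, f r s := by
      refine intervalIntegral.integral_congr fun r _ => ?_
      rw [intervalIntegral.integral_symm d c]
    rw [this, intervalIntegral.integral_neg, h1 d c hdc a b,
      intervalIntegral.integral_symm d c]

-- FTC-2 on [0,T] with derivatives within Icc
lemma my_ftc_icc {E : Type*} [NormedAddCommGroup E] [NormedSpace ℝ E] [CompleteSpace E] {T : ℝ}
    {u du : ℝ → E} (hder : ∀ s ∈ Icc (0:ℝ) T, HasDerivWithinAt u (du s) (Icc (0:ℝ) T) s)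
    (hcont : ContinuousOn u (Icc (0:ℝ) T)) (hcont' : ContinuousOn du (Icc (0:ℝ) T))
    {t : ℝ} (ht : t ∈ Icc (0:ℝ) T) :
    ∫ s in (0:ℝ)..t, du s = u t - u 0 := by
  refine intervalIntegral.integral_eq_sub_of_hasDeriv_right_of_le ht.1
    (hcont.mono (Icc_subset_Icc le_rfl ht.2)) (fun s hs => ?_) ?_
  · have hsI : s ∈ Icc (0:ℝ) T := ⟨hs.1.le, hs.2.le.trans ht.2⟩
    have : HasDerivAt u (du s) s :=
      (hder s hsI).hasDerivAt (Icc_mem_nhds hs.1 (lt_of_lt_of_le hs.2 ht.2))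
    exact this.hasDerivWithinAt
  · exact (hcont'.mono (by rw [uIcc_of_le ht.1]; exact Icc_subset_Icc le_rfl ht.2)).intervalIntegrable

-- FTC-2 on the whole line
lemma my_ftc_line {E : Type*} [NormedAddCommGroup E] [NormedSpace ℝ E] [CompleteSpace E]
    {u du : ℝ → E} (hder : ∀ r, HasDerivAt u (du r) r) (hcont : Continuous du) (a b : ℝ) :
    ∫ r in a..b, du r = u b - u a :=
  intervalIntegral.integral_eq_sub_of_hasDerivAt (fun r _ => hder r) (hcont.intervalIntegrable a b)

-- FTC-1 for a continuous integrand
lemma my_ftc1 {E : Type*} [NormedAddCommGroup E] [NormedSpace ℝ E] [CompleteSpace E]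
    {f : ℝ → E} (hf : Continuous f) (a b : ℝ) :
    HasDerivAt (fun u => ∫ s in a..u, f s) (f b) b :=
  intervalIntegral.integral_hasDerivAt_right (hf.intervalIntegrable a b)
    (hf.stronglyMeasurableAtFilter volume (nhds b)) hf.continuousAt

lemma my_uniq {E : Type*} [NormedAddCommGroup E] [NormedSpace ℝ E]
    {f : ℝ → E} {a b : E} {s : Set ℝ} {t : ℝ} (hs : UniqueDiffWithinAt ℝ s t)
    (h1 : HasDerivWithinAt f a s t) (h2 : HasDerivWithinAt f b s t) : a = b := by
  rw [← h1.derivWithin hs, ← h2.derivWithin hs]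

theorem energy_identity_first_formulation
    (T : ℝ) (hT : 0 < T)
    (x xρ xρρ xt xtρ : ℝ → ℝ → E2)
    -- periodicity: functions on I = ℝ/ℤ are 1-periodic
    (hper : ∀ ρ t, x (ρ + 1) t = x ρ t)
    -- existence of the derivatives x_ρ, x_ρρ, x_t and x_tρ = (x_ρ)_t
    (hdρ : ∀ (ρ : ℝ), ∀ t ∈ Set.Icc (0:ℝ) T, HasDerivAt (fun s => x s t) (xρ ρ t) ρ)
    (hdρρ : ∀ (ρ : ℝ), ∀ t ∈ Set.Icc (0:ℝ) T, HasDerivAt (fun s => xρ s t) (xρρ ρ t) ρ)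
    (hdt : ∀ (ρ : ℝ), ∀ t ∈ Set.Icc (0:ℝ) T,
      HasDerivWithinAt (fun τ => x ρ τ) (xt ρ t) (Set.Icc 0 T) t)
    (hdtρ : ∀ (ρ : ℝ), ∀ t ∈ Set.Icc (0:ℝ) T,
      HasDerivWithinAt (fun τ => xρ ρ τ) (xtρ ρ t) (Set.Icc 0 T) t)
    -- continuity of x, x_ρ, x_ρρ, x_t, x_tρ on I × [0,T]
    (hcont : ContinuousOn (fun p : ℝ × ℝ => x p.1 p.2) (Set.univ ×ˢ Set.Icc 0 T))
    (hcontρ : ContinuousOn (fun p : ℝ × ℝ => xρ p.1 p.2) (Set.univ ×ˢ Set.Icc 0 T))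
    (hcontρρ : ContinuousOn (fun p : ℝ × ℝ => xρρ p.1 p.2) (Set.univ ×ˢ Set.Icc 0 T))
    (hcontt : ContinuousOn (fun p : ℝ × ℝ => xt p.1 p.2) (Set.univ ×ˢ Set.Icc 0 T))
    (hconttρ : ContinuousOn (fun p : ℝ × ℝ => xtρ p.1 p.2) (Set.univ ×ˢ Set.Icc 0 T))
    -- x solves (★): (x·e₁)|x_ρ|² x_t − ((x·e₁) x_ρ)_ρ + |x_ρ|² e₁ = 0
    (hpde : ∀ (ρ : ℝ), ∀ t ∈ Set.Icc (0:ℝ) T,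
      (⟪x ρ t, e1⟫ * ‖xρ ρ t‖^2) • xt ρ t
        - (⟪xρ ρ t, e1⟫ • xρ ρ t + ⟪x ρ t, e1⟫ • xρρ ρ t)
        + ‖xρ ρ t‖^2 • e1 = 0) :
    ∀ t ∈ Set.Icc (0:ℝ) T,
      HasDerivWithinAt (fun τ => ∫ ρ in (0:ℝ)..1, ⟪x ρ τ, e1⟫ * ‖xρ ρ τ‖^2)
        (-2 * (∫ ρ in (0:ℝ)..1, ⟪x ρ t, e1⟫ * ‖xt ρ t‖^2 * ‖xρ ρ t‖^2)
          - ∫ ρ in (0:ℝ)..1, ⟪xt ρ t, e1⟫ * ‖xρ ρ t‖^2)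
        (Set.Icc 0 T) t := by
  -- the clamp map onto [0,T]
  set c : ℝ → ℝ := fun τ => max 0 (min τ T) with hcdef
  have hcC : Continuous c := continuous_const.max (continuous_id.min continuous_const)
  have hcm : ∀ τ, c τ ∈ Icc (0:ℝ) T :=
    fun τ => ⟨le_max_left _ _, max_le hT.le (min_le_right _ _)⟩
  have hce : ∀ {τ : ℝ}, τ ∈ Icc (0:ℝ) T → c τ = τ := by
    intro τ hτ
    simp only [hcdef]
    rw [min_eq_left hτ.2, max_eq_right hτ.1]
  have h0T : (0:ℝ) ∈ Icc (0:ℝ) T := ⟨le_rfl, hT.le⟩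
  have hIcc0t : ∀ {t : ℝ}, t ∈ Icc (0:ℝ) T → uIcc (0:ℝ) t ⊆ Icc (0:ℝ) T := by
    intro t ht
    rw [uIcc_of_le ht.1]
    exact Icc_subset_Icc le_rfl ht.2
  -- clamped versions are continuous everywhere
  have clampC : ∀ (f : ℝ → ℝ → E2), ContinuousOn (fun p : ℝ × ℝ => f p.1 p.2)
      (Set.univ ×ˢ Set.Icc 0 T) → Continuous (fun p : ℝ × ℝ => f p.1 (c p.2)) := by
    intro f hf
    exact hf.comp_continuous (continuous_fst.prodMk (hcC.comp continuous_snd))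
      (fun p => Set.mk_mem_prod trivial (hcm _))
  have Cx := clampC x hcont
  have Cxρ := clampC xρ hcontρ
  have Cxρρ := clampC xρρ hcontρρ
  have Cxt := clampC xt hcontt
  have Cxtρ := clampC xtρ hconttρ
  -- slice continuity
  have sliceρ : ∀ {f : ℝ → ℝ → E2}, Continuous (fun p : ℝ × ℝ => f p.1 (c p.2)) →
      ∀ {t : ℝ}, t ∈ Icc (0:ℝ) T → Continuous (fun ρ => f ρ t) := by
    intro f hf t ht
    have h2 : Continuous (fun ρ => f ρ (c t)) := hf.comp (continuous_id.prodMk continuous_const)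
    rwa [hce ht] at h2
  have sliceT : ∀ {f : ℝ → ℝ → E2}, Continuous (fun p : ℝ × ℝ => f p.1 (c p.2)) →
      ∀ (ρ : ℝ), Continuous (fun τ => f ρ (c τ)) := fun {f} hf ρ =>
    hf.comp (continuous_const.prodMk continuous_id)
  have sliceTOn : ∀ {f : ℝ → ℝ → E2}, Continuous (fun p : ℝ × ℝ => f p.1 (c p.2)) →
      ∀ (ρ : ℝ), ContinuousOn (fun τ => f ρ τ) (Icc (0:ℝ) T) := by
    intro f hf ρ
    refine ((sliceT hf ρ).continuousOn).congr ?_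
    intro τ hτ
    show f ρ τ = f ρ (c τ)
    rw [hce hτ]
  -- periodicity of the derivatives
  have perρ : ∀ (ρ : ℝ), ∀ t ∈ Icc (0:ℝ) T, xρ (ρ + 1) t = xρ ρ t := by
    intro ρ t ht
    have h1 : HasDerivAt ((fun s => x s t) ∘ (fun s : ℝ => s + 1))
        ((1:ℝ) • xρ (ρ + 1) t) ρ :=
      HasDerivAt.scomp (x := ρ) (hh := (hasDerivAt_id ρ).add_const 1)
        (hg := hdρ (ρ + 1) t ht)
    have h2 : ((fun s => x s t) ∘ (fun s : ℝ => s + 1)) = fun s => x s t :=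
      funext fun s => hper s t
    rw [h2] at h1
    have h3 := h1.unique (hdρ ρ t ht)
    simpa using h3
  have pert : ∀ (ρ : ℝ), ∀ t ∈ Icc (0:ℝ) T, xt (ρ + 1) t = xt ρ t := by
    intro ρ t ht
    have h1 := hdt (ρ + 1) t ht
    rw [show (fun τ => x (ρ + 1) τ) = fun τ => x ρ τ from funext fun τ => hper ρ τ] at h1
    exact my_uniq (uniqueDiffOn_Icc hT t ht) h1 (hdt ρ t ht)
  -- fundamental theorem of calculus in time and space
  have hA : ∀ (ρ : ℝ), ∀ t ∈ Icc (0:ℝ) T, ∫ s in (0:ℝ)..t, xt ρ s = x ρ t - x ρ 0 :=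
    fun ρ t ht => my_ftc_icc (fun s hs => hdt ρ s hs) (sliceTOn Cx ρ) (sliceTOn Cxt ρ) ht
  have hB : ∀ (ρ : ℝ), ∀ t ∈ Icc (0:ℝ) T, ∫ s in (0:ℝ)..t, xtρ ρ s = xρ ρ t - xρ ρ 0 :=
    fun ρ t ht => my_ftc_icc (fun s hs => hdtρ ρ s hs) (sliceTOn Cxρ ρ) (sliceTOn Cxtρ ρ) ht
  have hC : ∀ (ρ : ℝ), ∀ u ∈ Icc (0:ℝ) T, ∫ r in (0:ℝ)..ρ, xρ r u = x ρ u - x 0 u :=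
    fun ρ u hu => my_ftc_line (fun r => hdρ r u hu) (sliceρ Cxρ hu) 0 ρ
  -- Schwarz-type identity:  xt ρ t = xt 0 t + ∫ r in 0..ρ, xtρ r t
  have hxtid : ∀ (ρ : ℝ), ∀ t₁ ∈ Icc (0:ℝ) T,
      xt ρ t₁ = xt 0 t₁ + ∫ r in (0:ℝ)..ρ, xtρ r t₁ := by
    intro ρ t₁ ht₁
    have hcont2 : Continuous (fun s => ∫ r in (0:ℝ)..ρ, xtρ r (c s)) := by
      apply intervalIntegral.continuous_parametric_intervalIntegral_of_continuous'
      exact Cxtρ.comp continuous_swap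
    have key : ∀ t ∈ Icc (0:ℝ) T,
        (∫ s in (0:ℝ)..t, xt ρ (c s))
          = ∫ s in (0:ℝ)..t, (xt 0 (c s) + ∫ r in (0:ℝ)..ρ, xtρ r (c s)) := by
      intro t ht
      have e1' : (∫ s in (0:ℝ)..t, xt ρ (c s)) = ∫ s in (0:ℝ)..t, xt ρ s :=
        intervalIntegral.integral_congr fun s hs => by rw [hce (hIcc0t ht hs)]
      calc (∫ s in (0:ℝ)..t, xt ρ (c s)) = x ρ t - x ρ 0 := by rw [e1']; exact hA ρ t ht
        _ = (x 0 t - x 0 0) + ((x ρ t - x 0 t) - (x ρ 0 - x 0 0)) := by abel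
        _ = (∫ s in (0:ℝ)..t, xt 0 s)
            + ((∫ r in (0:ℝ)..ρ, xρ r t) - ∫ r in (0:ℝ)..ρ, xρ r 0) := by
            rw [hA 0 t ht, hC ρ t ht, hC ρ 0 h0T]
        _ = (∫ s in (0:ℝ)..t, xt 0 s) + ∫ r in (0:ℝ)..ρ, (xρ r t - xρ r 0) := by
            rw [intervalIntegral.integral_sub ((sliceρ Cxρ ht).intervalIntegrable 0 ρ)
              ((sliceρ Cxρ h0T).intervalIntegrable 0 ρ)]
        _ = (∫ s in (0:ℝ)..t, xt 0 s)
            + ∫ r in (0:ℝ)..ρ, ∫ s in (0:ℝ)..t, xtρ r (c s) := by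
            refine congrArg _ (intervalIntegral.integral_congr fun r _ => ?_)
            rw [← hB r t ht]
            exact intervalIntegral.integral_congr fun s hs => by rw [hce (hIcc0t ht hs)]
        _ = (∫ s in (0:ℝ)..t, xt 0 s)
            + ∫ s in (0:ℝ)..t, ∫ r in (0:ℝ)..ρ, xtρ r (c s) := by
            rw [my_swap (f := fun r s => xtρ r (c s)) (by exact Cxtρ) 0 ρ 0 t]
        _ = (∫ s in (0:ℝ)..t, xt 0 (c s))
            + ∫ s in (0:ℝ)..t, ∫ r in (0:ℝ)..ρ, xtρ r (c s) := by
            rw [show (∫ s in (0:ℝ)..t, xt 0 s) = ∫ s in (0:ℝ)..t, xt 0 (c s) from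
              intervalIntegral.integral_congr fun s hs => (by rw [hce (hIcc0t ht hs)] : xt 0 (c s) = xt 0 s).symm]
        _ = ∫ s in (0:ℝ)..t, (xt 0 (c s) + ∫ r in (0:ℝ)..ρ, xtρ r (c s)) := by
            rw [← intervalIntegral.integral_add ((sliceT Cxt 0).intervalIntegrable 0 t)
              (hcont2.intervalIntegrable 0 t)]
    have w1 : HasDerivAt (fun τ => ∫ s in (0:ℝ)..τ, xt ρ (c s)) (xt ρ (c t₁)) t₁ :=
      my_ftc1 (sliceT Cxt ρ) 0 t₁
    have w2 : HasDerivAt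
        (fun τ => ∫ s in (0:ℝ)..τ, (xt 0 (c s) + ∫ r in (0:ℝ)..ρ, xtρ r (c s)))
        (xt 0 (c t₁) + ∫ r in (0:ℝ)..ρ, xtρ r (c t₁)) t₁ :=
      my_ftc1 ((sliceT Cxt 0).add hcont2) 0 t₁
    have h3 : HasDerivWithinAt (fun τ => ∫ s in (0:ℝ)..τ, xt ρ (c s))
        (xt 0 (c t₁) + ∫ r in (0:ℝ)..ρ, xtρ r (c t₁)) (Icc (0:ℝ) T) t₁ :=
      (w2.hasDerivWithinAt).congr (fun τ hτ => key τ hτ) (key t₁ ht₁)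
    have h4 := my_uniq (uniqueDiffOn_Icc hT t₁ ht₁) (w1.hasDerivWithinAt) h3
    rw [hce ht₁] at h4
    exact h4
  -- hence xt is differentiable in ρ with derivative xtρ
  have hxtD : ∀ (ρ : ℝ), ∀ t ∈ Icc (0:ℝ) T, HasDerivAt (fun ρ' => xt ρ' t) (xtρ ρ t) ρ := by
    intro ρ t ht
    have h1 : (fun ρ' => xt ρ' t) = fun ρ' => xt 0 t + ∫ r in (0:ℝ)..ρ', xtρ r t :=
      funext fun ρ' => hxtid ρ' t ht
    rw [h1]
    exact HasDerivAt.const_add (xt 0 t) (my_ftc1 (sliceρ Cxtρ ht) 0 ρ)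
  -- time derivative of the integrand
  have hFD : ∀ (ρ : ℝ), ∀ t ∈ Icc (0:ℝ) T,
      HasDerivWithinAt (fun τ => ⟪x ρ τ, e1⟫ * ⟪xρ ρ τ, xρ ρ τ⟫)
        (⟪xt ρ t, e1⟫ * ⟪xρ ρ t, xρ ρ t⟫ +
          ⟪x ρ t, e1⟫ * (⟪xρ ρ t, xtρ ρ t⟫ + ⟪xtρ ρ t, xρ ρ t⟫)) (Icc (0:ℝ) T) t := by
    intro ρ t ht
    have h1 : HasDerivWithinAt (fun τ => ⟪x ρ τ, e1⟫) (⟪xt ρ t, e1⟫) (Icc (0:ℝ) T) t := by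
      simpa using HasDerivWithinAt.inner ℝ (hdt ρ t ht) (hasDerivWithinAt_const t (Icc (0:ℝ) T) e1)
    have h2 := HasDerivWithinAt.inner ℝ (hdtρ ρ t ht) (hdtρ ρ t ht)
    exact h1.mul h2
  have hFTCt : ∀ (ρ : ℝ), ∀ t ∈ Icc (0:ℝ) T,
      (∫ s in (0:ℝ)..t, (⟪xt ρ s, e1⟫ * ⟪xρ ρ s, xρ ρ s⟫ +
          ⟪x ρ s, e1⟫ * (⟪xρ ρ s, xtρ ρ s⟫ + ⟪xtρ ρ s, xρ ρ s⟫)))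
        = ⟪x ρ t, e1⟫ * ⟪xρ ρ t, xρ ρ t⟫ - ⟪x ρ 0, e1⟫ * ⟪xρ ρ 0, xρ ρ 0⟫ := by
    intro ρ t ht
    refine my_ftc_icc (fun s hs => hFD ρ s hs) ?_ ?_ ht
    · exact ((sliceTOn Cx ρ).inner continuousOn_const).mul ((sliceTOn Cxρ ρ).inner (sliceTOn Cxρ ρ))
    · exact (((sliceTOn Cxt ρ).inner continuousOn_const).mul
        ((sliceTOn Cxρ ρ).inner (sliceTOn Cxρ ρ))).add
        (((sliceTOn Cx ρ).inner continuousOn_const).mul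
          (((sliceTOn Cxρ ρ).inner (sliceTOn Cxtρ ρ)).add
            ((sliceTOn Cxtρ ρ).inner (sliceTOn Cxρ ρ))))
  -- now fix t and prove the statement
  intro t ht
  -- dotted PDE
  have hdot : ∀ ρ : ℝ,
      ⟪xρ ρ t, e1⟫ * ⟪xρ ρ t, xt ρ t⟫ + ⟪x ρ t, e1⟫ * ⟪xρρ ρ t, xt ρ t⟫
        = ⟪x ρ t, e1⟫ * ⟪xρ ρ t, xρ ρ t⟫ * ⟪xt ρ t, xt ρ t⟫
          + ⟪xρ ρ t, xρ ρ t⟫ * ⟪xt ρ t, e1⟫ := by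
    intro ρ
    have h1 := congrArg (fun v : E2 => ⟪v, xt ρ t⟫) (hpde ρ t ht)
    simp only [inner_sub_left, inner_add_left, real_inner_smul_left, inner_zero_left] at h1
    rw [← real_inner_self_eq_norm_sq, real_inner_comm (xt ρ t) e1] at h1
    linear_combination -h1
  -- derivative of the boundary function g
  have hgD : ∀ ρ : ℝ, HasDerivAt (fun ρ' => ⟪x ρ' t, e1⟫ * ⟪xρ ρ' t, xt ρ' t⟫)
      (⟪xρ ρ t, e1⟫ * ⟪xρ ρ t, xt ρ t⟫ +
        ⟪x ρ t, e1⟫ * (⟪xρ ρ t, xtρ ρ t⟫ + ⟪xρρ ρ t, xt ρ t⟫)) ρ := by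
    intro ρ
    have h1 : HasDerivAt (fun ρ' => ⟪x ρ' t, e1⟫) (⟪xρ ρ t, e1⟫) ρ := by
      simpa using HasDerivAt.inner ℝ (hdρ ρ t ht) (hasDerivAt_const ρ e1)
    have h2 := HasDerivAt.inner ℝ (hdρρ ρ t ht) (hxtD ρ t ht)
    exact h1.mul h2
  have hgdC : Continuous (fun ρ => ⟪xρ ρ t, e1⟫ * ⟪xρ ρ t, xt ρ t⟫ +
      ⟪x ρ t, e1⟫ * (⟪xρ ρ t, xtρ ρ t⟫ + ⟪xρρ ρ t, xt ρ t⟫)) := by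
    have c1 := sliceρ Cx ht
    have c2 := sliceρ Cxρ ht
    have c3 := sliceρ Cxρρ ht
    have c4 := sliceρ Cxt ht
    have c5 := sliceρ Cxtρ ht
    exact ((c2.inner continuous_const).mul (c2.inner c4)).add
      ((c1.inner continuous_const).mul ((c2.inner c5).add (c3.inner c4)))
  have hg10 : (∫ ρ in (0:ℝ)..1, (⟪xρ ρ t, e1⟫ * ⟪xρ ρ t, xt ρ t⟫ +
      ⟪x ρ t, e1⟫ * (⟪xρ ρ t, xtρ ρ t⟫ + ⟪xρρ ρ t, xt ρ t⟫))) = 0 := by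
    rw [my_ftc_line hgD hgdC 0 1]
    rw [show (1:ℝ) = 0 + 1 from by norm_num, hper 0 t, perρ 0 t ht, pert 0 t ht, sub_self]
  -- pointwise identity
  have hpoint : ∀ ρ : ℝ,
      (⟪xt ρ t, e1⟫ * ⟪xρ ρ t, xρ ρ t⟫ +
        ⟪x ρ t, e1⟫ * (⟪xρ ρ t, xtρ ρ t⟫ + ⟪xtρ ρ t, xρ ρ t⟫))
        = 2 * (⟪xρ ρ t, e1⟫ * ⟪xρ ρ t, xt ρ t⟫ +
            ⟪x ρ t, e1⟫ * (⟪xρ ρ t, xtρ ρ t⟫ + ⟪xρρ ρ t, xt ρ t⟫))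
          - (2 * (⟪x ρ t, e1⟫ * ‖xt ρ t‖^2 * ‖xρ ρ t‖^2) + ⟪xt ρ t, e1⟫ * ‖xρ ρ t‖^2) := by
    intro ρ
    have h := hdot ρ
    simp only [← real_inner_self_eq_norm_sq]
    rw [real_inner_comm (xtρ ρ t) (xρ ρ t)]
    linear_combination -2 * h
  -- integrability of the pieces
  have c1 := sliceρ Cx ht
  have c2 := sliceρ Cxρ ht
  have c4 := sliceρ Cxt ht
  have c5 := sliceρ Cxtρ ht
  have iP : IntervalIntegrable (fun ρ => ⟪x ρ t, e1⟫ * ‖xt ρ t‖^2 * ‖xρ ρ t‖^2)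
      volume 0 1 :=
    (((c1.inner continuous_const).mul ((c4.norm).pow 2)).mul ((c2.norm).pow 2)).intervalIntegrable 0 1
  have iQ : IntervalIntegrable (fun ρ => ⟪xt ρ t, e1⟫ * ‖xρ ρ t‖^2) volume 0 1 :=
    ((c4.inner continuous_const).mul ((c2.norm).pow 2)).intervalIntegrable 0 1
  -- value of the integral of Ft at time t
  have hFt_val : (∫ ρ in (0:ℝ)..1, (⟪xt ρ t, e1⟫ * ⟪xρ ρ t, xρ ρ t⟫ +
        ⟪x ρ t, e1⟫ * (⟪xρ ρ t, xtρ ρ t⟫ + ⟪xtρ ρ t, xρ ρ t⟫)))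
      = -2 * (∫ ρ in (0:ℝ)..1, ⟪x ρ t, e1⟫ * ‖xt ρ t‖^2 * ‖xρ ρ t‖^2)
        - ∫ ρ in (0:ℝ)..1, ⟪xt ρ t, e1⟫ * ‖xρ ρ t‖^2 := by
    have i2gd : IntervalIntegrable (fun ρ => 2 * (⟪xρ ρ t, e1⟫ * ⟪xρ ρ t, xt ρ t⟫ +
        ⟪x ρ t, e1⟫ * (⟪xρ ρ t, xtρ ρ t⟫ + ⟪xρρ ρ t, xt ρ t⟫))) volume 0 1 :=
      (continuous_const.mul hgdC).intervalIntegrable 0 1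
    have i2P : IntervalIntegrable (fun ρ => 2 * (⟪x ρ t, e1⟫ * ‖xt ρ t‖^2 * ‖xρ ρ t‖^2))
        volume 0 1 :=
      (continuous_const.mul (((c1.inner continuous_const).mul ((c4.norm).pow 2)).mul
        ((c2.norm).pow 2))).intervalIntegrable 0 1
    have hcongr : (∫ ρ in (0:ℝ)..1, (⟪xt ρ t, e1⟫ * ⟪xρ ρ t, xρ ρ t⟫ +
          ⟪x ρ t, e1⟫ * (⟪xρ ρ t, xtρ ρ t⟫ + ⟪xtρ ρ t, xρ ρ t⟫)))
        = ∫ ρ in (0:ℝ)..1, (2 * (⟪xρ ρ t, e1⟫ * ⟪xρ ρ t, xt ρ t⟫ +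
            ⟪x ρ t, e1⟫ * (⟪xρ ρ t, xtρ ρ t⟫ + ⟪xρρ ρ t, xt ρ t⟫))
          - (2 * (⟪x ρ t, e1⟫ * ‖xt ρ t‖^2 * ‖xρ ρ t‖^2) + ⟪xt ρ t, e1⟫ * ‖xρ ρ t‖^2)) :=
      intervalIntegral.integral_congr fun ρ _ => hpoint ρ
    rw [hcongr, intervalIntegral.integral_sub i2gd (i2P.add iQ),
      intervalIntegral.integral_const_mul, hg10,
      intervalIntegral.integral_add i2P iQ, intervalIntegral.integral_const_mul]
    ring
  -- rewrite the goal function in inner-product form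
  have hfun : (fun τ => ∫ ρ in (0:ℝ)..1, ⟪x ρ τ, e1⟫ * ‖xρ ρ τ‖^2)
      = fun τ => ∫ ρ in (0:ℝ)..1, ⟪x ρ τ, e1⟫ * ⟪xρ ρ τ, xρ ρ τ⟫ := by
    funext τ
    exact intervalIntegral.integral_congr fun ρ _ => by rw [real_inner_self_eq_norm_sq]
  rw [hfun]
  -- the clamped integrated time-derivative
  have HHc : Continuous (fun s => ∫ ρ in (0:ℝ)..1,
      (⟪xt ρ (c s), e1⟫ * ⟪xρ ρ (c s), xρ ρ (c s)⟫ +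
        ⟪x ρ (c s), e1⟫ * (⟪xρ ρ (c s), xtρ ρ (c s)⟫ + ⟪xtρ ρ (c s), xρ ρ (c s)⟫))) := by
    apply intervalIntegral.continuous_parametric_intervalIntegral_of_continuous'
    have d1 : Continuous (fun p : ℝ × ℝ => x p.2 (c p.1)) := Cx.comp continuous_swap
    have d2 : Continuous (fun p : ℝ × ℝ => xρ p.2 (c p.1)) := Cxρ.comp continuous_swap
    have d4 : Continuous (fun p : ℝ × ℝ => xt p.2 (c p.1)) := Cxt.comp continuous_swap
    have d5 : Continuous (fun p : ℝ × ℝ => xtρ p.2 (c p.1)) := Cxtρ.comp continuous_swap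
    exact ((d4.inner continuous_const).mul (d2.inner d2)).add
      ((d1.inner continuous_const).mul ((d2.inner d5).add (d5.inner d2)))
  -- the integral identity G τ = G 0 + ∫ s in 0..τ, HH s on [0,T]
  have chain : ∀ τ ∈ Icc (0:ℝ) T,
      (∫ ρ in (0:ℝ)..1, ⟪x ρ τ, e1⟫ * ⟪xρ ρ τ, xρ ρ τ⟫)
        = (∫ ρ in (0:ℝ)..1, ⟪x ρ 0, e1⟫ * ⟪xρ ρ 0, xρ ρ 0⟫)
          + ∫ s in (0:ℝ)..τ, (∫ ρ in (0:ℝ)..1,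
            (⟪xt ρ (c s), e1⟫ * ⟪xρ ρ (c s), xρ ρ (c s)⟫ +
              ⟪x ρ (c s), e1⟫ * (⟪xρ ρ (c s), xtρ ρ (c s)⟫ + ⟪xtρ ρ (c s), xρ ρ (c s)⟫))) := by
    intro τ hτ
    have i1 : IntervalIntegrable (fun ρ => ⟪x ρ τ, e1⟫ * ⟪xρ ρ τ, xρ ρ τ⟫) volume 0 1 :=
      (((sliceρ Cx hτ).inner continuous_const).mul
        ((sliceρ Cxρ hτ).inner (sliceρ Cxρ hτ))).intervalIntegrable 0 1
    have i0 : IntervalIntegrable (fun ρ => ⟪x ρ 0, e1⟫ * ⟪xρ ρ 0, xρ ρ 0⟫) volume 0 1 :=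
      (((sliceρ Cx h0T).inner continuous_const).mul
        ((sliceρ Cxρ h0T).inner (sliceρ Cxρ h0T))).intervalIntegrable 0 1
    have step1 : (∫ ρ in (0:ℝ)..1, ⟪x ρ τ, e1⟫ * ⟪xρ ρ τ, xρ ρ τ⟫)
        - (∫ ρ in (0:ℝ)..1, ⟪x ρ 0, e1⟫ * ⟪xρ ρ 0, xρ ρ 0⟫)
        = ∫ ρ in (0:ℝ)..1, ∫ s in (0:ℝ)..τ,
            (⟪xt ρ (c s), e1⟫ * ⟪xρ ρ (c s), xρ ρ (c s)⟫ +
              ⟪x ρ (c s), e1⟫ * (⟪xρ ρ (c s), xtρ ρ (c s)⟫ + ⟪xtρ ρ (c s), xρ ρ (c s)⟫)) := by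
      rw [← intervalIntegral.integral_sub i1 i0]
      refine intervalIntegral.integral_congr fun ρ _ => ?_
      rw [← hFTCt ρ τ hτ]
      exact intervalIntegral.integral_congr fun s hs => by rw [hce (hIcc0t hτ hs)]
    have step2 : (∫ ρ in (0:ℝ)..1, ∫ s in (0:ℝ)..τ,
            (⟪xt ρ (c s), e1⟫ * ⟪xρ ρ (c s), xρ ρ (c s)⟫ +
              ⟪x ρ (c s), e1⟫ * (⟪xρ ρ (c s), xtρ ρ (c s)⟫ + ⟪xtρ ρ (c s), xρ ρ (c s)⟫)))
        = ∫ s in (0:ℝ)..τ, (∫ ρ in (0:ℝ)..1,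
            (⟪xt ρ (c s), e1⟫ * ⟪xρ ρ (c s), xρ ρ (c s)⟫ +
              ⟪x ρ (c s), e1⟫ * (⟪xρ ρ (c s), xtρ ρ (c s)⟫ + ⟪xtρ ρ (c s), xρ ρ (c s)⟫))) := by
      refine my_swap ?_ 0 1 0 τ
      exact ((Cxt.inner continuous_const).mul (Cxρ.inner Cxρ)).add
        ((Cx.inner continuous_const).mul ((Cxρ.inner Cxtρ).add (Cxtρ.inner Cxρ)))
    rw [step2] at step1
    linarith [step1]
  -- conclude
  have hder : HasDerivAt (fun τ => (∫ ρ in (0:ℝ)..1, ⟪x ρ 0, e1⟫ * ⟪xρ ρ 0, xρ ρ 0⟫)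
      + ∫ s in (0:ℝ)..τ, (∫ ρ in (0:ℝ)..1,
        (⟪xt ρ (c s), e1⟫ * ⟪xρ ρ (c s), xρ ρ (c s)⟫ +
          ⟪x ρ (c s), e1⟫ * (⟪xρ ρ (c s), xtρ ρ (c s)⟫ + ⟪xtρ ρ (c s), xρ ρ (c s)⟫))))
      (∫ ρ in (0:ℝ)..1,
        (⟪xt ρ (c t), e1⟫ * ⟪xρ ρ (c t), xρ ρ (c t)⟫ +
          ⟪x ρ (c t), e1⟫ * (⟪xρ ρ (c t), xtρ ρ (c t)⟫ + ⟪xtρ ρ (c t), xρ ρ (c t)⟫))) t :=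
    HasDerivAt.const_add _ (my_ftc1 HHc 0 t)
  have hder2 := (hder.hasDerivWithinAt).congr (fun τ hτ => chain τ hτ) (chain t ht)
  rw [hce ht] at hder2
  rw [hFt_val] at hder2
  exact hder2
end
end

section
/- (Energy decay for the alternative formulation.) Let I = ℝ/ℤ, T > 0, and let x : I × [0,T] → ℝ² be such that x, x_ρ, x_ρρ, x_t and x_tρ exist and are continuous, and x solves the alternative system (x·e₁)² |x_ρ|² x_t − ((x·e₁)² x_ρ)_ρ + (x·e₁) |x_ρ|² e₁ = 0 on I × [0,T]. Then for every t ∈ [0,T], (d/dt) ½ ∫₀¹ (x·e₁)² |x_ρ|² dρ = −∫₀¹ (x·e₁)² |x_t|² |x_ρ|² dρ ≤ 0; in particular t ↦ ∫₀¹ (x·e₁)² |x_ρ|² dρ is non-increasing on [0,T]. -/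
/- STATEMENT 7: Energy decay for the alternative formulation (Section 4 of the paper):
for a smooth periodic solution of
`(x·e₁)² |x_ρ|² x_t − ((x·e₁)² x_ρ)_ρ + (x·e₁)|x_ρ|² e₁ = 0`,
`(d/dt) ½∫₀¹ (x·e₁)²|x_ρ|² dρ = −∫₀¹ (x·e₁)²|x_t|²|x_ρ|² dρ ≤ 0`, so the energy
`t ↦ ∫₀¹ (x·e₁)²|x_ρ|² dρ` is non-increasing on `[0,T]`. -/

open MeasureTheory Real Set
open scoped RealInnerProductSpace

noncomputable section

section helpers
variable {E : Type*} [NormedAddCommGroup E] [NormedSpace ℝ E]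

omit [NormedSpace ℝ E] in
lemma secCont {F : ℝ → ℝ → E} {T : ℝ}
    (hF : ContinuousOn (fun p : ℝ × ℝ => F p.1 p.2) (Set.univ ×ˢ Set.Icc 0 T))
    {t : ℝ} (ht : t ∈ Set.Icc (0:ℝ) T) : Continuous (fun s => F s t) :=
  hF.comp_continuous (continuous_id.prodMk continuous_const) (fun _ => ⟨trivial, ht⟩)

omit [NormedSpace ℝ E] in
lemma secContT {F : ℝ → ℝ → E} {T : ℝ}
    (hF : ContinuousOn (fun p : ℝ × ℝ => F p.1 p.2) (Set.univ ×ˢ Set.Icc 0 T)) (ρ : ℝ) :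
    ContinuousOn (fun τ => F ρ τ) (Set.Icc 0 T) :=
  hF.comp ((continuous_const.prodMk continuous_id).continuousOn) (fun _ hτ => ⟨trivial, hτ⟩)

def cl (T : ℝ) : ℝ → ℝ := fun τ => max 0 (min τ T)

lemma cl_cont (T : ℝ) : Continuous (cl T) :=
  continuous_const.max (continuous_id.min continuous_const)

lemma cl_mem {T : ℝ} (hT : 0 ≤ T) (τ : ℝ) : cl T τ ∈ Set.Icc (0:ℝ) T :=
  ⟨le_max_left _ _, max_le hT (min_le_right _ _)⟩

lemma cl_id {T t : ℝ} (ht : t ∈ Set.Icc (0:ℝ) T) : cl T t = t := by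
  simp only [cl, min_eq_left ht.2, max_eq_right ht.1]

omit [NormedSpace ℝ E] in
lemma eqOn_Icc_of_eqOn_Ioo {f g : ℝ → E} {T : ℝ} (hT : 0 < T)
    (h : ∀ t ∈ Set.Ioo (0:ℝ) T, f t = g t)
    (hf : ContinuousOn f (Set.Icc 0 T)) (hg : ContinuousOn g (Set.Icc 0 T)) :
    ∀ t ∈ Set.Icc (0:ℝ) T, f t = g t := by
  intro t ht
  have hcl : t ∈ closure (Set.Ioo (0:ℝ) T) := by rw [closure_Ioo hT.ne]; exact ht
  have hne : (nhdsWithin t (Set.Ioo (0:ℝ) T)).NeBot := mem_closure_iff_nhdsWithin_neBot.mp hcl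
  have h1 : Filter.Tendsto f (nhdsWithin t (Set.Ioo (0:ℝ) T)) (nhds (f t)) :=
    (hf t ht).mono Set.Ioo_subset_Icc_self
  have h2 : Filter.Tendsto g (nhdsWithin t (Set.Ioo (0:ℝ) T)) (nhds (g t)) :=
    (hg t ht).mono Set.Ioo_subset_Icc_self
  have h1' : Filter.Tendsto g (nhdsWithin t (Set.Ioo (0:ℝ) T)) (nhds (f t)) :=
    h1.congr' (eventually_mem_nhdsWithin.mono fun τ hτ => h τ hτ)
  exact tendsto_nhds_unique h1' h2

end helpers

lemma mixed_partial {T : ℝ} (hT : 0 < T) (x xρ xt xtρ : ℝ → ℝ → E2)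
    (hdρ : ∀ (ρ : ℝ), ∀ t ∈ Set.Icc (0:ℝ) T, HasDerivAt (fun s => x s t) (xρ ρ t) ρ)
    (hdt : ∀ (ρ : ℝ), ∀ t ∈ Set.Icc (0:ℝ) T,
      HasDerivWithinAt (fun τ => x ρ τ) (xt ρ t) (Set.Icc 0 T) t)
    (hdtρ : ∀ (ρ : ℝ), ∀ t ∈ Set.Icc (0:ℝ) T,
      HasDerivWithinAt (fun τ => xρ ρ τ) (xtρ ρ t) (Set.Icc 0 T) t)
    (hcontρ : ContinuousOn (fun p : ℝ × ℝ => xρ p.1 p.2) (Set.univ ×ˢ Set.Icc 0 T))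
    (hcontt : ContinuousOn (fun p : ℝ × ℝ => xt p.1 p.2) (Set.univ ×ˢ Set.Icc 0 T))
    (hconttρ : ContinuousOn (fun p : ℝ × ℝ => xtρ p.1 p.2) (Set.univ ×ˢ Set.Icc 0 T)) :
    ∀ (ρ : ℝ), ∀ t ∈ Set.Icc (0:ℝ) T, HasDerivAt (fun s => xt s t) (xtρ ρ t) ρ := by
  have key : ∀ (ρ : ℝ), ∀ t ∈ Set.Icc (0:ℝ) T,
      xt ρ t = xt 0 t + ∫ s in (0:ℝ)..ρ, xtρ s t := by
    intro ρ
    obtain ⟨C, hC⟩ := (isCompact_uIcc (a := (0:ℝ)) (b := ρ)).prod isCompact_Icc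
      |>.exists_bound_of_continuousOn
        (hconttρ.mono (Set.prod_mono (Set.subset_univ _) (le_refl _)))
    have interior_eq : ∀ t ∈ Set.Ioo (0:ℝ) T,
        (fun τ => xt ρ τ - xt 0 τ) t = (fun τ => ∫ s in (0:ℝ)..ρ, xtρ s τ) t := by
      intro t ht
      have htI : t ∈ Set.Icc (0:ℝ) T := Set.Ioo_subset_Icc_self ht
      have hmem : Set.Icc (0:ℝ) T ∈ nhds t :=
        Filter.mem_of_superset (isOpen_Ioo.mem_nhds ht) Set.Ioo_subset_Icc_self
      have hε0 : 0 < min t (T - t) := lt_min ht.1 (sub_pos.mpr ht.2)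
      have hball : Metric.ball t (min t (T - t)) ⊆ Set.Ioo (0:ℝ) T := by
        intro τ hτ
        rw [Metric.mem_ball, Real.dist_eq] at hτ
        have h1 := abs_lt.mp hτ
        have h2 := min_le_left t (T - t)
        have h3 := min_le_right t (T - t)
        constructor <;> [linarith [h1.1]; linarith [h1.2]]
      have hder := intervalIntegral.hasDerivAt_integral_of_dominated_loc_of_deriv_le
        (F := fun τ s => xρ s τ) (F' := fun τ s => xtρ s τ) (a := (0:ℝ)) (b := ρ)
        (x₀ := t) (bound := fun _ => C) (μ := volume) (Metric.ball_mem_nhds t hε0)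
        (by filter_upwards [hmem] with τ hτ
            exact (secCont hcontρ hτ).aestronglyMeasurable)
        ((secCont hcontρ htI).intervalIntegrable _ _)
        (secCont hconttρ htI).aestronglyMeasurable
        (Filter.Eventually.of_forall fun s hs τ hτ =>
          hC (s, τ) ⟨Set.uIoc_subset_uIcc hs, Set.Ioo_subset_Icc_self (hball hτ)⟩)
        intervalIntegrable_const
        (Filter.Eventually.of_forall fun s hs τ hτ =>
          (hdtρ s τ (Set.Ioo_subset_Icc_self (hball hτ))).hasDerivAt
            (Filter.mem_of_superset (isOpen_Ioo.mem_nhds (hball hτ)) Set.Ioo_subset_Icc_self))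
      have hEq : ∀ τ ∈ Set.Icc (0:ℝ) T, (∫ s in (0:ℝ)..ρ, xρ s τ) = x ρ τ - x 0 τ := fun τ hτ =>
        intervalIntegral.integral_eq_sub_of_hasDerivAt (fun s _ => hdρ s τ hτ)
          ((secCont hcontρ hτ).intervalIntegrable _ _)
      have h1 : HasDerivAt (fun τ => x ρ τ - x 0 τ) (xt ρ t - xt 0 t) t :=
        ((hdt ρ t htI).sub (hdt 0 t htI)).hasDerivAt hmem
      have h2 : HasDerivAt (fun τ => x ρ τ - x 0 τ) (∫ s in (0:ℝ)..ρ, xtρ s t) t := by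
        refine hder.2.congr_of_eventuallyEq ?_
        filter_upwards [hmem] with τ hτ
        exact (hEq τ hτ).symm
      simpa using (h1.unique h2)
    have hgcont : ContinuousOn (fun τ => ∫ s in (0:ℝ)..ρ, xtρ s τ) (Set.Icc 0 T) := by
      have h1 : Continuous (fun τ => ∫ s in (0:ℝ)..ρ, xtρ s (cl T τ)) := by
        apply intervalIntegral.continuous_parametric_intervalIntegral_of_continuous'
          (μ := volume) ?_ 0 ρ
        exact hconttρ.comp_continuous (continuous_snd.prodMk ((cl_cont T).comp continuous_fst))
          (fun p => ⟨trivial, cl_mem hT.le _⟩)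
      exact h1.continuousOn.congr fun τ hτ => by simp only [cl_id hτ]
    have := eqOn_Icc_of_eqOn_Ioo hT interior_eq
      ((secContT hcontt ρ).sub (secContT hcontt 0)) hgcont
    intro t ht
    have h := this t ht
    linear_combination (norm := module) h
  intro ρ t ht
  have hcont_s : Continuous (fun s => xtρ s t) := secCont hconttρ ht
  have h1 : HasDerivAt (fun s => xt 0 t + ∫ u in (0:ℝ)..s, xtρ u t) (xtρ ρ t) ρ :=
    (intervalIntegral.integral_hasDerivAt_right (hcont_s.intervalIntegrable _ _)
      (hcont_s.stronglyMeasurableAtFilter _ _) hcont_s.continuousAt).const_add _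
  exact h1.congr_of_eventuallyEq (Filter.Eventually.of_forall fun s => key s t ht)


theorem energy_decay_alternative_formulation
    (T : ℝ) (hT : 0 < T)
    (x xρ xρρ xt xtρ : ℝ → ℝ → E2)
    -- periodicity: functions on I = ℝ/ℤ are 1-periodic
    (hper : ∀ ρ t, x (ρ + 1) t = x ρ t)
    -- existence of the derivatives x_ρ, x_ρρ, x_t and x_tρ = (x_ρ)_t
    (hdρ : ∀ (ρ : ℝ), ∀ t ∈ Set.Icc (0:ℝ) T, HasDerivAt (fun s => x s t) (xρ ρ t) ρ)
    (hdρρ : ∀ (ρ : ℝ), ∀ t ∈ Set.Icc (0:ℝ) T, HasDerivAt (fun s => xρ s t) (xρρ ρ t) ρ)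
    (hdt : ∀ (ρ : ℝ), ∀ t ∈ Set.Icc (0:ℝ) T,
      HasDerivWithinAt (fun τ => x ρ τ) (xt ρ t) (Set.Icc 0 T) t)
    (hdtρ : ∀ (ρ : ℝ), ∀ t ∈ Set.Icc (0:ℝ) T,
      HasDerivWithinAt (fun τ => xρ ρ τ) (xtρ ρ t) (Set.Icc 0 T) t)
    -- continuity of x, x_ρ, x_ρρ, x_t, x_tρ on I × [0,T]
    (hcont : ContinuousOn (fun p : ℝ × ℝ => x p.1 p.2) (Set.univ ×ˢ Set.Icc 0 T))
    (hcontρ : ContinuousOn (fun p : ℝ × ℝ => xρ p.1 p.2) (Set.univ ×ˢ Set.Icc 0 T))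
    (hcontρρ : ContinuousOn (fun p : ℝ × ℝ => xρρ p.1 p.2) (Set.univ ×ˢ Set.Icc 0 T))
    (hcontt : ContinuousOn (fun p : ℝ × ℝ => xt p.1 p.2) (Set.univ ×ˢ Set.Icc 0 T))
    (hconttρ : ContinuousOn (fun p : ℝ × ℝ => xtρ p.1 p.2) (Set.univ ×ˢ Set.Icc 0 T))
    -- x solves the alternative system
    -- (x·e₁)² |x_ρ|² x_t − ((x·e₁)² x_ρ)_ρ + (x·e₁)|x_ρ|² e₁ = 0,
    -- with ((x·e₁)² x_ρ)_ρ = 2(x·e₁)(x_ρ·e₁) x_ρ + (x·e₁)² x_ρρ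
    (hpde : ∀ (ρ : ℝ), ∀ t ∈ Set.Icc (0:ℝ) T,
      (⟪x ρ t, e1⟫^2 * ‖xρ ρ t‖^2) • xt ρ t
        - ((2 * ⟪x ρ t, e1⟫ * ⟪xρ ρ t, e1⟫) • xρ ρ t + ⟪x ρ t, e1⟫^2 • xρρ ρ t)
        + (⟪x ρ t, e1⟫ * ‖xρ ρ t‖^2) • e1 = 0) :
    (∀ t ∈ Set.Icc (0:ℝ) T,
      HasDerivWithinAt (fun τ => (1/2) * ∫ ρ in (0:ℝ)..1, ⟪x ρ τ, e1⟫^2 * ‖xρ ρ τ‖^2)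
        (-(∫ ρ in (0:ℝ)..1, ⟪x ρ t, e1⟫^2 * ‖xt ρ t‖^2 * ‖xρ ρ t‖^2))
        (Set.Icc 0 T) t ∧
      -(∫ ρ in (0:ℝ)..1, ⟪x ρ t, e1⟫^2 * ‖xt ρ t‖^2 * ‖xρ ρ t‖^2) ≤ 0) ∧
    AntitoneOn (fun τ => ∫ ρ in (0:ℝ)..1, ⟪x ρ τ, e1⟫^2 * ‖xρ ρ τ‖^2)
      (Set.Icc 0 T) := by
  have hT0 : (0:ℝ) ≤ T := hT.le
  have hmix := mixed_partial hT x xρ xt xtρ hdρ hdt hdtρ hcontρ hcontt hconttρ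
  -- periodicity of derivatives
  have hperρ : ∀ t ∈ Set.Icc (0:ℝ) T, xρ 1 t = xρ 0 t := by
    intro t ht
    have h0 : HasDerivAt (fun s => x s t) (xρ 1 t) ((fun s : ℝ => s + 1) 0) := by
      simpa using hdρ 1 t ht
    have h1 := HasDerivAt.scomp (𝕜 := ℝ) 0 h0 ((hasDerivAt_id (0:ℝ)).add_const (1:ℝ))
    have h3 : HasDerivAt (fun s : ℝ => x s t) ((1:ℝ) • xρ 1 t) 0 :=
      h1.congr_of_eventuallyEq (Filter.Eventually.of_forall fun s => (hper s t).symm)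
    rw [one_smul] at h3
    exact h3.unique (hdρ 0 t ht)
  have hpert : ∀ t ∈ Set.Icc (0:ℝ) T, xt 1 t = xt 0 t := by
    intro t ht
    have h3 : (fun τ => x 1 τ) = (fun τ => x 0 τ) := funext fun τ => by simpa using hper 0 τ
    have h4 := hdt 1 t ht
    rw [h3] at h4
    have h5 := hdt 0 t ht
    have u := uniqueDiffOn_Icc hT t ht
    rw [← h4.derivWithin u, ← h5.derivWithin u]
  have hperx : ∀ t, x 1 t = x 0 t := fun t => by simpa using hper 0 t
  -- derivative in ρ of Q = A² ⟪xρ, xt⟫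
  have hQ' : ∀ (ρ : ℝ), ∀ t ∈ Set.Icc (0:ℝ) T,
      HasDerivAt (fun s => ⟪x s t, e1⟫^2 * ⟪xρ s t, xt s t⟫)
        (2*⟪x ρ t, e1⟫*⟪xρ ρ t, e1⟫*⟪xρ ρ t, xt ρ t⟫
          + ⟪x ρ t, e1⟫^2*(⟪xρ ρ t, xtρ ρ t⟫ + ⟪xρρ ρ t, xt ρ t⟫)) ρ := by
    intro ρ t ht
    have hA : HasDerivAt (fun s => ⟪x s t, e1⟫) ⟪xρ ρ t, e1⟫ ρ := by
      simpa using HasDerivAt.inner ℝ (hdρ ρ t ht) (hasDerivAt_const ρ e1)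
    have hI : HasDerivAt (fun s => ⟪xρ s t, xt s t⟫)
        (⟪xρ ρ t, xtρ ρ t⟫ + ⟪xρρ ρ t, xt ρ t⟫) ρ :=
      HasDerivAt.inner ℝ (hdρρ ρ t ht) (hmix ρ t ht)
    have h2 := (hA.pow 2).mul hI
    refine h2.congr_deriv ?_
    simp only [Pi.pow_apply]
    ring
  -- time derivative of the energy density
  have hdens : ∀ (ρ : ℝ), ∀ t ∈ Set.Icc (0:ℝ) T,
      HasDerivWithinAt (fun τ => (1/2) * (⟪x ρ τ, e1⟫^2 * ‖xρ ρ τ‖^2))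
        (⟪x ρ t, e1⟫ * ⟪xt ρ t, e1⟫ * ‖xρ ρ t‖^2 + ⟪x ρ t, e1⟫^2 * ⟪xρ ρ t, xtρ ρ t⟫)
        (Set.Icc 0 T) t := by
    intro ρ t ht
    have hA : HasDerivWithinAt (fun τ => ⟪x ρ τ, e1⟫) ⟪xt ρ t, e1⟫ (Set.Icc 0 T) t := by
      simpa using HasDerivWithinAt.inner ℝ (hdt ρ t ht) (hasDerivWithinAt_const t _ e1)
    have hB : HasDerivWithinAt (fun τ => ⟪xρ ρ τ, xρ ρ τ⟫)
        (⟪xρ ρ t, xtρ ρ t⟫ + ⟪xtρ ρ t, xρ ρ t⟫) (Set.Icc 0 T) t :=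
      HasDerivWithinAt.inner ℝ (hdtρ ρ t ht) (hdtρ ρ t ht)
    have hC := ((hA.pow 2).mul hB).const_mul (1/2 : ℝ)
    have heq : (fun τ => (1/2 : ℝ) * (⟪x ρ τ, e1⟫^2 * ‖xρ ρ τ‖^2))
        = fun τ => (1/2 : ℝ) * (⟪x ρ τ, e1⟫^2 * ⟪xρ ρ τ, xρ ρ τ⟫) := by
      funext τ; rw [real_inner_self_eq_norm_sq]
    rw [heq]
    refine hC.congr_deriv ?_
    simp only [Pi.pow_apply]
    rw [real_inner_comm (xtρ ρ t) (xρ ρ t), ← real_inner_self_eq_norm_sq]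
    ring
  -- the PDE identity
  have hkey : ∀ (ρ : ℝ), ∀ t ∈ Set.Icc (0:ℝ) T,
      ⟪x ρ t, e1⟫ * ⟪xt ρ t, e1⟫ * ‖xρ ρ t‖^2 + ⟪x ρ t, e1⟫^2 * ⟪xρ ρ t, xtρ ρ t⟫
      = (2*⟪x ρ t, e1⟫*⟪xρ ρ t, e1⟫*⟪xρ ρ t, xt ρ t⟫
          + ⟪x ρ t, e1⟫^2*(⟪xρ ρ t, xtρ ρ t⟫ + ⟪xρρ ρ t, xt ρ t⟫))
        - ⟪x ρ t, e1⟫^2 * ‖xt ρ t‖^2 * ‖xρ ρ t‖^2 := by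
    intro ρ t ht
    have h0 := congrArg (fun v : E2 => ⟪v, xt ρ t⟫) (hpde ρ t ht)
    simp only [inner_sub_left, inner_add_left, real_inner_smul_left, inner_zero_left] at h0
    rw [real_inner_self_eq_norm_sq, real_inner_comm (xt ρ t) e1] at h0
    linear_combination h0
  -- integral of d/dρ Q vanishes
  have hQint : ∀ t ∈ Set.Icc (0:ℝ) T,
      (∫ ρ in (0:ℝ)..1, (2*⟪x ρ t, e1⟫*⟪xρ ρ t, e1⟫*⟪xρ ρ t, xt ρ t⟫
          + ⟪x ρ t, e1⟫^2*(⟪xρ ρ t, xtρ ρ t⟫ + ⟪xρρ ρ t, xt ρ t⟫))) = 0 := by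
    intro t ht
    have c1 := secCont hcont ht
    have c2 := secCont hcontρ ht
    have c3 := secCont hcontρρ ht
    have c4 := secCont hcontt ht
    have c5 := secCont hconttρ ht
    have hQdc : Continuous (fun ρ => 2*⟪x ρ t, e1⟫*⟪xρ ρ t, e1⟫*⟪xρ ρ t, xt ρ t⟫
        + ⟪x ρ t, e1⟫^2*(⟪xρ ρ t, xtρ ρ t⟫ + ⟪xρρ ρ t, xt ρ t⟫)) :=
      (((continuous_const.mul (c1.inner continuous_const)).mul
        (c2.inner continuous_const)).mul (c2.inner c4)).add
        (((c1.inner continuous_const).pow 2).mul ((c2.inner c5).add (c3.inner c4)))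
    have heval := intervalIntegral.integral_eq_sub_of_hasDerivAt
      (f := fun ρ => ⟪x ρ t, e1⟫^2 * ⟪xρ ρ t, xt ρ t⟫)
      (fun ρ _ => hQ' ρ t ht) (hQdc.intervalIntegrable 0 1)
    rw [heval]
    simp only [hperx t, hperρ t ht, hpert t ht]
    ring
  -- uncurried continuity of P
  have hPunc : ContinuousOn (fun p : ℝ × ℝ =>
      ⟪x p.1 p.2, e1⟫ * ⟪xt p.1 p.2, e1⟫ * ‖xρ p.1 p.2‖^2
        + ⟪x p.1 p.2, e1⟫^2 * ⟪xρ p.1 p.2, xtρ p.1 p.2⟫) (Set.univ ×ˢ Set.Icc 0 T) := by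
    exact (((hcont.inner continuousOn_const).mul (hcontt.inner continuousOn_const)).mul
      (hcontρ.norm.pow 2)).add (((hcont.inner continuousOn_const).pow 2).mul
      (hcontρ.inner hconttρ))
  -- continuity of the clamped dissipation
  have hgc : Continuous (fun τ : ℝ =>
      -(∫ ρ in (0:ℝ)..1, ⟪x ρ (cl T τ), e1⟫^2 * ‖xt ρ (cl T τ)‖^2 * ‖xρ ρ (cl T τ)‖^2)) := by
    have hHunc : ContinuousOn (fun p : ℝ × ℝ =>
        ⟪x p.1 p.2, e1⟫^2 * ‖xt p.1 p.2‖^2 * ‖xρ p.1 p.2‖^2) (Set.univ ×ˢ Set.Icc 0 T) :=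
      (((hcont.inner continuousOn_const).pow 2).mul (hcontt.norm.pow 2)).mul (hcontρ.norm.pow 2)
    have hu : Continuous (Function.uncurry fun (τ ρ : ℝ) =>
        ⟪x ρ (cl T τ), e1⟫^2 * ‖xt ρ (cl T τ)‖^2 * ‖xρ ρ (cl T τ)‖^2) := by
      apply hHunc.comp_continuous (continuous_snd.prodMk ((cl_cont T).comp continuous_fst))
        (fun p => ⟨trivial, cl_mem hT0 _⟩)
    have h9 := intervalIntegral.continuous_parametric_intervalIntegral_of_continuous'
      (μ := volume) (f := fun (τ ρ : ℝ) =>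
        ⟪x ρ (cl T τ), e1⟫^2 * ‖xt ρ (cl T τ)‖^2 * ‖xρ ρ (cl T τ)‖^2) hu 0 1
    exact h9.neg
  have hgc_nonpos : ∀ τ : ℝ,
      -(∫ ρ in (0:ℝ)..1, ⟪x ρ (cl T τ), e1⟫^2 * ‖xt ρ (cl T τ)‖^2 * ‖xρ ρ (cl T τ)‖^2) ≤ 0 := by
    intro τ
    refine neg_nonpos.mpr (intervalIntegral.integral_nonneg zero_le_one fun ρ _ => by positivity)
  -- the fundamental representation
  have hrep : ∀ t ∈ Set.Icc (0:ℝ) T,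
      ((1/2) * ∫ ρ in (0:ℝ)..1, ⟪x ρ t, e1⟫^2 * ‖xρ ρ t‖^2)
        - ((1/2) * ∫ ρ in (0:ℝ)..1, ⟪x ρ 0, e1⟫^2 * ‖xρ ρ 0‖^2)
      = ∫ τ in (0:ℝ)..t,
          -(∫ ρ in (0:ℝ)..1, ⟪x ρ (cl T τ), e1⟫^2 * ‖xt ρ (cl T τ)‖^2 * ‖xρ ρ (cl T τ)‖^2) := by
    intro t ht
    have htT : Set.Icc (0:ℝ) t ⊆ Set.Icc (0:ℝ) T := Set.Icc_subset_Icc le_rfl ht.2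
    have huIcc : Set.uIcc (0:ℝ) t ⊆ Set.Icc (0:ℝ) T := by
      rw [Set.uIcc_of_le ht.1]; exact htT
    have h0mem : (0:ℝ) ∈ Set.Icc (0:ℝ) T := ⟨le_rfl, hT0⟩
    have hPsec : ∀ ρ : ℝ, ContinuousOn (fun τ => ⟪x ρ τ, e1⟫ * ⟪xt ρ τ, e1⟫ * ‖xρ ρ τ‖^2
        + ⟪x ρ τ, e1⟫^2 * ⟪xρ ρ τ, xtρ ρ τ⟫) (Set.Icc 0 T) := by
      intro ρ
      have c1 := secContT hcont ρ
      have c2 := secContT hcontρ ρ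
      have c4 := secContT hcontt ρ
      have c5 := secContT hconttρ ρ
      exact (((c1.inner continuousOn_const).mul (c4.inner continuousOn_const)).mul
        (c2.norm.pow 2)).add (((c1.inner continuousOn_const).pow 2).mul (c2.inner c5))
    have stepi : ∀ ρ : ℝ,
        (1/2) * (⟪x ρ t, e1⟫^2 * ‖xρ ρ t‖^2) - (1/2) * (⟪x ρ 0, e1⟫^2 * ‖xρ ρ 0‖^2)
        = ∫ τ in (0:ℝ)..t, (⟪x ρ τ, e1⟫ * ⟪xt ρ τ, e1⟫ * ‖xρ ρ τ‖^2
            + ⟪x ρ τ, e1⟫^2 * ⟪xρ ρ τ, xtρ ρ τ⟫) := by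
      intro ρ
      have hcmono : ContinuousOn (fun τ => (1/2) * (⟪x ρ τ, e1⟫^2 * ‖xρ ρ τ‖^2))
          (Set.Icc 0 t) :=
        fun τ hτ => ((hdens ρ τ (htT hτ)).continuousWithinAt).mono htT
      have hderiv : ∀ τ ∈ Set.Ioo (0:ℝ) t, HasDerivWithinAt
          (fun τ => (1/2) * (⟪x ρ τ, e1⟫^2 * ‖xρ ρ τ‖^2))
          (⟪x ρ τ, e1⟫ * ⟪xt ρ τ, e1⟫ * ‖xρ ρ τ‖^2 + ⟪x ρ τ, e1⟫^2 * ⟪xρ ρ τ, xtρ ρ τ⟫)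
          (Set.Ioi τ) τ := by
        intro τ hτ
        have hτI : τ ∈ Set.Icc (0:ℝ) T := ⟨hτ.1.le, (hτ.2.trans_le ht.2).le⟩
        have hmem : Set.Icc (0:ℝ) T ∈ nhds τ :=
          Filter.mem_of_superset (isOpen_Ioo.mem_nhds ⟨hτ.1, hτ.2.trans_le ht.2⟩)
            Set.Ioo_subset_Icc_self
        exact ((hdens ρ τ hτI).hasDerivAt hmem).hasDerivWithinAt
      have hint : IntervalIntegrable (fun τ => ⟪x ρ τ, e1⟫ * ⟪xt ρ τ, e1⟫ * ‖xρ ρ τ‖^2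
          + ⟪x ρ τ, e1⟫^2 * ⟪xρ ρ τ, xtρ ρ τ⟫) volume 0 t :=
        ((hPsec ρ).mono huIcc).intervalIntegrable
      exact (intervalIntegral.integral_eq_sub_of_hasDeriv_right_of_le
        ht.1 hcmono hderiv hint).symm
    have hd_t : IntervalIntegrable (fun ρ => (1/2) * (⟪x ρ t, e1⟫^2 * ‖xρ ρ t‖^2))
        volume 0 1 := by
      have c1 := secCont hcont ht
      have c2 := secCont hcontρ ht
      exact (continuous_const.mul (((c1.inner continuous_const).pow 2).mul
        (c2.norm.pow 2))).intervalIntegrable 0 1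
    have hd_0 : IntervalIntegrable (fun ρ => (1/2) * (⟪x ρ 0, e1⟫^2 * ‖xρ ρ 0‖^2))
        volume 0 1 := by
      have c1 := secCont hcont h0mem
      have c2 := secCont hcontρ h0mem
      exact (continuous_const.mul (((c1.inner continuous_const).pow 2).mul
        (c2.norm.pow 2))).intervalIntegrable 0 1
    have hLHS : ((1/2) * ∫ ρ in (0:ℝ)..1, ⟪x ρ t, e1⟫^2 * ‖xρ ρ t‖^2)
        - ((1/2) * ∫ ρ in (0:ℝ)..1, ⟪x ρ 0, e1⟫^2 * ‖xρ ρ 0‖^2)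
        = ∫ ρ in (0:ℝ)..1, ((1/2) * (⟪x ρ t, e1⟫^2 * ‖xρ ρ t‖^2)
            - (1/2) * (⟪x ρ 0, e1⟫^2 * ‖xρ ρ 0‖^2)) := by
      rw [intervalIntegral.integral_sub hd_t hd_0, intervalIntegral.integral_const_mul,
        intervalIntegral.integral_const_mul]
    rw [hLHS]
    simp only [stepi]
    have hfub : (∫ ρ in (0:ℝ)..1, ∫ τ in (0:ℝ)..t, (⟪x ρ τ, e1⟫ * ⟪xt ρ τ, e1⟫ * ‖xρ ρ τ‖^2
            + ⟪x ρ τ, e1⟫^2 * ⟪xρ ρ τ, xtρ ρ τ⟫))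
        = ∫ τ in (0:ℝ)..t, ∫ ρ in (0:ℝ)..1, (⟪x ρ τ, e1⟫ * ⟪xt ρ τ, e1⟫ * ‖xρ ρ τ‖^2
            + ⟪x ρ τ, e1⟫^2 * ⟪xρ ρ τ, xtρ ρ τ⟫) := by
      simp only [intervalIntegral.integral_of_le ht.1,
        intervalIntegral.integral_of_le (zero_le_one' ℝ)]
      apply MeasureTheory.integral_integral_swap
      rw [Measure.prod_restrict]
      apply MeasureTheory.IntegrableOn.mono_set ?_
        (Set.prod_mono Set.Ioc_subset_Icc_self Set.Ioc_subset_Icc_self)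
      apply ContinuousOn.integrableOn_compact (isCompact_Icc.prod isCompact_Icc)
      exact hPunc.mono (Set.prod_mono (Set.subset_univ _) (Set.Icc_subset_Icc le_rfl ht.2))
    rw [hfub]
    apply intervalIntegral.integral_congr
    intro τ hτ
    have hτI : τ ∈ Set.Icc (0:ℝ) T := huIcc hτ
    show (∫ ρ in (0:ℝ)..1, (⟪x ρ τ, e1⟫ * ⟪xt ρ τ, e1⟫ * ‖xρ ρ τ‖^2
        + ⟪x ρ τ, e1⟫^2 * ⟪xρ ρ τ, xtρ ρ τ⟫))
      = -(∫ ρ in (0:ℝ)..1, ⟪x ρ (cl T τ), e1⟫^2 * ‖xt ρ (cl T τ)‖^2 * ‖xρ ρ (cl T τ)‖^2)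
    rw [cl_id hτI]
    have c1 := secCont hcont hτI
    have c2 := secCont hcontρ hτI
    have c3 := secCont hcontρρ hτI
    have c4 := secCont hcontt hτI
    have c5 := secCont hconttρ hτI
    have hQdc : Continuous (fun ρ => 2*⟪x ρ τ, e1⟫*⟪xρ ρ τ, e1⟫*⟪xρ ρ τ, xt ρ τ⟫
        + ⟪x ρ τ, e1⟫^2*(⟪xρ ρ τ, xtρ ρ τ⟫ + ⟪xρρ ρ τ, xt ρ τ⟫)) :=
      (((continuous_const.mul (c1.inner continuous_const)).mul
        (c2.inner continuous_const)).mul (c2.inner c4)).add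
        (((c1.inner continuous_const).pow 2).mul ((c2.inner c5).add (c3.inner c4)))
    have hHc : Continuous (fun ρ => ⟪x ρ τ, e1⟫^2 * ‖xt ρ τ‖^2 * ‖xρ ρ τ‖^2) :=
      (((c1.inner continuous_const).pow 2).mul (c4.norm.pow 2)).mul (c2.norm.pow 2)
    have h1 : (fun ρ => ⟪x ρ τ, e1⟫ * ⟪xt ρ τ, e1⟫ * ‖xρ ρ τ‖^2
        + ⟪x ρ τ, e1⟫^2 * ⟪xρ ρ τ, xtρ ρ τ⟫)
        = fun ρ => (2*⟪x ρ τ, e1⟫*⟪xρ ρ τ, e1⟫*⟪xρ ρ τ, xt ρ τ⟫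
          + ⟪x ρ τ, e1⟫^2*(⟪xρ ρ τ, xtρ ρ τ⟫ + ⟪xρρ ρ τ, xt ρ τ⟫))
          - ⟪x ρ τ, e1⟫^2 * ‖xt ρ τ‖^2 * ‖xρ ρ τ‖^2 := funext fun ρ => hkey ρ τ hτI
    rw [h1, intervalIntegral.integral_sub (hQdc.intervalIntegrable 0 1)
      (hHc.intervalIntegrable 0 1), hQint τ hτI]
    ring
  constructor
  · intro t ht
    constructor
    · have hG : HasDerivAt (fun u => ∫ τ in (0:ℝ)..u,
          -(∫ ρ in (0:ℝ)..1, ⟪x ρ (cl T τ), e1⟫^2 * ‖xt ρ (cl T τ)‖^2 * ‖xρ ρ (cl T τ)‖^2))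
          (-(∫ ρ in (0:ℝ)..1, ⟪x ρ (cl T t), e1⟫^2 * ‖xt ρ (cl T t)‖^2 * ‖xρ ρ (cl T t)‖^2)) t :=
        intervalIntegral.integral_hasDerivAt_right (hgc.intervalIntegrable _ _)
          (hgc.stronglyMeasurableAtFilter _ _) hgc.continuousAt
      have hG2 := ((hG.hasDerivWithinAt (s := Set.Icc 0 T)).const_add
        ((1/2) * ∫ ρ in (0:ℝ)..1, ⟪x ρ 0, e1⟫^2 * ‖xρ ρ 0‖^2))
      rw [cl_id ht] at hG2
      refine hG2.congr (fun y hy => ?_) ?_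
      · have := hrep y hy; linarith
      · have := hrep t ht; linarith
    · have := hgc_nonpos t; rwa [cl_id ht] at this
  · intro s hs t ht hst
    have h1 := hrep s hs
    have h2 := hrep t ht
    have h3 : (∫ τ in (0:ℝ)..t,
          -(∫ ρ in (0:ℝ)..1, ⟪x ρ (cl T τ), e1⟫^2 * ‖xt ρ (cl T τ)‖^2 * ‖xρ ρ (cl T τ)‖^2))
        - (∫ τ in (0:ℝ)..s,
          -(∫ ρ in (0:ℝ)..1, ⟪x ρ (cl T τ), e1⟫^2 * ‖xt ρ (cl T τ)‖^2 * ‖xρ ρ (cl T τ)‖^2))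
        = ∫ τ in s..t,
          -(∫ ρ in (0:ℝ)..1, ⟪x ρ (cl T τ), e1⟫^2 * ‖xt ρ (cl T τ)‖^2 * ‖xρ ρ (cl T τ)‖^2) :=
      intervalIntegral.integral_interval_sub_left (hgc.intervalIntegrable _ _)
        (hgc.intervalIntegrable _ _)
    have h4 : (∫ τ in s..t,
          -(∫ ρ in (0:ℝ)..1, ⟪x ρ (cl T τ), e1⟫^2 * ‖xt ρ (cl T τ)‖^2 * ‖xρ ρ (cl T τ)‖^2)) ≤ 0 := by
      rw [intervalIntegral.integral_of_le hst]
      exact integral_nonpos fun τ => hgc_nonpos τ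
    linarith
end
end
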